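/- arXiv:2505.13991 — 7 statements merged into one kernel-verified Lean document; each statement's English description precedes it below -/
import Mathlib

section
/- For every ε with 0 < ε < 1 and every positive integer r, the sum of n^(−ε) over positive integers n with rad(n) = r is at most (2/ε)^(2^(1/ε)). -/
open scoped ENNReal NNReal

/-- The radical of a positive integer: the product of its distinct prime factors. -/
def rad (n : ℕ) : ℕ := n.primeFactors.prod id

private lemma squarefree_rad {n : ℕ} (hn : 0 < n) : Squarefree (rad n) := by
  have hprime : ∀ p ∈ n.primeFactors, p.Prime := fun p hp => Nat.prime_of_mem_primeFactors hp
  have hne : rad n ≠ 0 :=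
    Finset.prod_ne_zero_iff.2 fun p hp => (hprime p hp).ne_zero
  rw [Nat.squarefree_iff_factorization_le_one hne]
  intro q
  have h1 : (rad n).factorization = ∑ p ∈ n.primeFactors, (p : ℕ).factorization := by
    rw [rad]
    exact Nat.factorization_prod fun p hp => (hprime p hp).ne_zero
  rw [h1, Finset.sum_apply']
  have h2 : ∀ p ∈ n.primeFactors, (p : ℕ).factorization q = if p = q then 1 else 0 := by
    intro p hp
    rw [Nat.Prime.factorization (hprime p hp), Finsupp.single_apply]
  rw [Finset.sum_congr rfl h2, Finset.sum_ite_eq' n.primeFactors q (fun _ => 1)]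
  split <;> simp

private lemma tsum_pi_fin : ∀ (n : ℕ) (f : Fin n → ℕ → ℝ≥0∞),
    ∑' g : Fin n → ℕ, ∏ i, f i (g i) = ∏ i, ∑' k, f i k := by
  intro n
  induction n with
  | zero =>
    intro f
    simp only [Finset.univ_eq_empty, Finset.prod_empty]
    exact tsum_eq_single (fun i => i.elim0) fun b hb =>
      absurd (Subsingleton.elim b _) hb
  | succ n ih =>
    intro f
    rw [← (Fin.consEquiv fun _ : Fin (n + 1) => ℕ).tsum_eq
      (f := fun g : Fin (n + 1) → ℕ => ∏ i, f i (g i))]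
    have hc : ∀ (k : ℕ) (g : Fin n → ℕ),
        (∏ i, f i ((Fin.consEquiv fun _ : Fin (n + 1) => ℕ) (k, g) i))
          = f 0 k * ∏ i : Fin n, f i.succ (g i) := by
      intro k g
      rw [Fin.prod_univ_succ]
      simp [Fin.consEquiv]
    rw [ENNReal.tsum_prod']
    simp_rw [hc, ENNReal.tsum_mul_left, ENNReal.tsum_mul_right]
    rw [ih fun i => f i.succ, Fin.prod_univ_succ]

private lemma tsum_pi_prod {ι : Type*} [Fintype ι] (f : ι → ℕ → ℝ≥0∞) :
    ∑' g : ι → ℕ, ∏ i, f i (g i) = ∏ i, ∑' k, f i k := by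
  classical
  obtain ⟨n, ⟨e⟩⟩ : ∃ n, Nonempty (ι ≃ Fin n) := ⟨_, ⟨Fintype.equivFin ι⟩⟩
  set E : (Fin n → ℕ) ≃ (ι → ℕ) := Equiv.arrowCongr e.symm (Equiv.refl ℕ) with hE
  rw [← E.tsum_eq (f := fun g : ι → ℕ => ∏ i, f i (g i))]
  have h1 : ∀ h : Fin n → ℕ, (∏ i, f i (E h i)) = ∏ j, f (e.symm j) (h j) := by
    intro h
    rw [← e.symm.prod_comp fun i => f i (E h i)]
    refine Finset.prod_congr rfl fun j _ => ?_
    simp [hE, Equiv.arrowCongr]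
  simp_rw [h1]
  rw [tsum_pi_fin n fun j => f (e.symm j)]
  exact e.symm.prod_comp fun i => ∑' k, f i k

private lemma factor_bound {ε : ℝ} (hε0 : 0 < ε) (hε1 : ε < 1) {p : ℕ} (hp : 2 ≤ p) :
    ((p : ℝ) ^ (-ε)) / (1 - (p : ℝ) ^ (-ε))
      ≤ if (p : ℝ) < 2 ^ (1 / ε) then 2 / ε else 1 := by
  have hp2 : (2 : ℝ) ≤ (p : ℝ) := by exact_mod_cast hp
  have hppos : (0 : ℝ) < (p : ℝ) := by linarith
  have hpe : (p : ℝ) ^ (-ε) = ((p : ℝ) ^ ε)⁻¹ := by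
    rw [Real.rpow_neg hppos.le]
  have h2e : (2 : ℝ) ^ ε ≤ (p : ℝ) ^ ε := Real.rpow_le_rpow (by norm_num) hp2 hε0.le
  split
  · -- small prime : bound 2/ε
    have hlog2 : (0.6931471803 : ℝ) < Real.log 2 := Real.log_two_gt_d9
    have hexp : (2 : ℝ) ^ ε = Real.exp (Real.log 2 * ε) := by
      rw [Real.rpow_def_of_pos (by norm_num)]
    have h1 : 1 + ε / 2 ≤ (2 : ℝ) ^ ε := by
      rw [hexp]
      have := Real.add_one_le_exp (Real.log 2 * ε)
      nlinarith
    set t : ℝ := 1 + ε / 2 with ht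
    have ht1 : 1 < t := by rw [ht]; linarith
    have ht0 : 0 < t := by linarith
    have hpt : t ≤ (p : ℝ) ^ ε := le_trans h1 h2e
    have hu : (p : ℝ) ^ (-ε) ≤ t⁻¹ := by
      rw [hpe]
      exact inv_anti₀ ht0 hpt
    have hdq : (t - 1) / t = 1 - t⁻¹ := by field_simp
    have hd : (t - 1) / t ≤ 1 - (p : ℝ) ^ (-ε) := by rw [hdq]; linarith
    have hdpos : 0 < (t - 1) / t := div_pos (by rw [ht]; linarith) ht0
    calc ((p : ℝ) ^ (-ε)) / (1 - (p : ℝ) ^ (-ε))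
        ≤ t⁻¹ / ((t - 1) / t) := div_le_div₀ (by positivity) hu hdpos hd
      _ = 2 / ε := by rw [ht]; field_simp; rw [add_sub_cancel_left, div_self hε0.ne']
  · -- large prime : bound 1
    rename_i hbig
    push_neg at hbig
    have h2 : (2 : ℝ) ≤ (p : ℝ) ^ ε := by
      have := Real.rpow_le_rpow (by positivity) hbig hε0.le
      rwa [← Real.rpow_mul (by norm_num), one_div_mul_cancel hε0.ne', Real.rpow_one] at this
    have hu : (p : ℝ) ^ (-ε) ≤ 1 / 2 := by
      rw [hpe]
      have h2' : (0 : ℝ) < (p : ℝ) ^ ε := by linarith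
      rw [inv_le_iff_one_le_mul₀ h2']
      linarith
    have hd : (1 : ℝ) / 2 ≤ 1 - (p : ℝ) ^ (-ε) := by linarith
    calc ((p : ℝ) ^ (-ε)) / (1 - (p : ℝ) ^ (-ε))
        ≤ (1 / 2) / (1 / 2) := div_le_div₀ (by norm_num) hu (by norm_num) hd
      _ = 1 := by norm_num

theorem tsum_rad_le (ε : ℝ) (hε0 : 0 < ε) (hε1 : ε < 1) (r : ℕ) (hr : 0 < r) :
    ∑' n : {n : ℕ // 0 < n ∧ rad n = r}, ((n : ℕ) : ℝ) ^ (-ε)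
      ≤ (2 / ε) ^ ((2 : ℝ) ^ (1 / ε)) := by
  classical
  set C : ℝ := (2 / ε) ^ ((2 : ℝ) ^ (1 / ε)) with hCdef
  have hC0 : (0 : ℝ) ≤ C := Real.rpow_nonneg (by positivity) _
  by_cases hsq : Squarefree r
  swap
  · have hE : IsEmpty {n : ℕ // 0 < n ∧ rad n = r} :=
      ⟨fun n => hsq (n.2.2 ▸ squarefree_rad n.2.1)⟩
    rw [tsum_empty]
    exact hC0
  set S := r.primeFactors with hSdef
  have hprime : ∀ p ∈ S, Nat.Prime p := fun p hp => Nat.prime_of_mem_primeFactors hp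
  have hpf : ∀ n : {n : ℕ // 0 < n ∧ rad n = r}, (n : ℕ).primeFactors = S := by
    rintro ⟨n, hn, hrad⟩
    have h1 : (rad n).primeFactors = n.primeFactors := by
      rw [rad]
      exact Nat.primeFactors_prod fun p hp => Nat.prime_of_mem_primeFactors hp
    rw [hrad] at h1
    exact h1.symm
  have ha_pos : ∀ (n : {n : ℕ // 0 < n ∧ rad n = r}), ∀ p ∈ S,
      1 ≤ (n : ℕ).factorization p := by
    intro n p hp
    have h1 : p ∈ (n : ℕ).primeFactors := by rw [hpf n]; exact hp
    rw [← Nat.support_factorization, Finsupp.mem_support_iff] at h1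
    omega
  have hrepr : ∀ n : {n : ℕ // 0 < n ∧ rad n = r},
      (n : ℕ) = ∏ p : ↥S, (p : ℕ) ^ (n : ℕ).factorization p := by
    intro n
    rw [Finset.prod_coe_sort S (fun p => p ^ (n : ℕ).factorization p)]
    conv_lhs => rw [← Nat.factorization_prod_pow_eq_self n.2.1.ne']
    rw [Finsupp.prod]
    exact Finset.prod_congr (by rw [Nat.support_factorization, hpf]) fun _ _ => rfl
  set F : {n : ℕ // 0 < n ∧ rad n = r} → (↥S → ℕ) :=
    fun n p => (n : ℕ).factorization p - 1 with hF
  have hFa : ∀ (n : {n : ℕ // 0 < n ∧ rad n = r}) (p : ↥S),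
      F n p + 1 = (n : ℕ).factorization p := by
    intro n p
    have := ha_pos n p p.2
    simp only [hF]
    omega
  have hinj : Function.Injective F := by
    intro n m h
    apply Subtype.ext
    rw [hrepr n, hrepr m]
    refine Finset.prod_congr rfl fun p _ => ?_
    have h1 := congrFun h p
    simp only [hF] at h1
    have h2 := ha_pos n p p.2
    have h3 := ha_pos m p p.2
    congr 1
    omega
  set q : ℕ → ℝ≥0 := fun p => ((p : ℝ≥0)) ^ (-ε) with hq
  have hterm : ∀ n : {n : ℕ // 0 < n ∧ rad n = r},
      (((n : ℕ) : ℝ≥0∞)) ^ (-ε) = ∏ p : ↥S, ((q p : ℝ≥0∞)) ^ (F n p + 1) := by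
    intro n
    have hne : ((n : ℕ) : ℝ≥0) ≠ 0 := by
      exact_mod_cast n.2.1.ne'
    rw [← ENNReal.coe_natCast, ← ENNReal.coe_rpow_of_ne_zero hne]
    have hNN : ((n : ℕ) : ℝ≥0) ^ (-ε) = ∏ p : ↥S, (q (p : ℕ)) ^ (F n p + 1) := by
      conv_lhs => rw [hrepr n]
      push_cast
      rw [← NNReal.finset_prod_rpow]
      refine Finset.prod_congr rfl fun p _ => ?_
      rw [hFa n p, ← NNReal.rpow_natCast ((p : ℕ) : ℝ≥0) ((n : ℕ).factorization p),
        ← NNReal.rpow_mul, mul_comm, NNReal.rpow_mul, NNReal.rpow_natCast]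
    rw [hNN]
    push_cast
    rfl
  -- per-prime data
  have hq_lt_one : ∀ p ∈ S, q p < 1 := by
    intro p hp
    have h2 : (1 : ℝ≥0) < (p : ℝ≥0) := by
      exact_mod_cast (hprime p hp).one_lt
    exact NNReal.rpow_lt_one_of_one_lt_of_neg h2 (by linarith)
  set b : ℕ → ℝ := fun p => if (p : ℝ) < 2 ^ (1 / ε) then 2 / ε else 1 with hb
  have hb_nonneg : ∀ p, 0 ≤ b p := by
    intro p
    simp only [hb]
    split
    · positivity
    · norm_num
  have hfac : ∀ p ∈ S, ((1 : ℝ≥0∞) - q p)⁻¹ * (q p) ≤ ENNReal.ofReal (b p) := by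
    intro p hp
    have hq1 := hq_lt_one p hp
    have hne : (1 : ℝ≥0) - q p ≠ 0 := (tsub_pos_of_lt hq1).ne'
    rw [← ENNReal.coe_one, ← ENNReal.coe_sub, ← ENNReal.coe_inv hne, ← ENNReal.coe_mul,
      ← ENNReal.ofReal_coe_nnreal]
    apply ENNReal.ofReal_le_ofReal
    rw [NNReal.coe_mul, NNReal.coe_inv, NNReal.coe_sub hq1.le]
    have hqr : ((q p : ℝ≥0) : ℝ) = (p : ℝ) ^ (-ε) := by
      simp [hq, NNReal.coe_rpow]
    rw [hqr, NNReal.coe_one, inv_mul_eq_div]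
    exact factor_bound hε0 hε1 (hprime p hp).two_le
  -- key ENNReal bound
  have key : ∑' n : {n : ℕ // 0 < n ∧ rad n = r}, (((n : ℕ) : ℝ≥0∞)) ^ (-ε)
      ≤ ENNReal.ofReal C := by
    calc ∑' n : {n : ℕ // 0 < n ∧ rad n = r}, (((n : ℕ) : ℝ≥0∞)) ^ (-ε)
        = ∑' n : {n : ℕ // 0 < n ∧ rad n = r}, ∏ p : ↥S, ((q p : ℝ≥0∞)) ^ (F n p + 1) :=
          tsum_congr hterm
      _ ≤ ∑' e : ↥S → ℕ, ∏ p : ↥S, ((q p : ℝ≥0∞)) ^ (e p + 1) :=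
          ENNReal.tsum_comp_le_tsum_of_injective hinj _
      _ = ∏ p : ↥S, ∑' k : ℕ, ((q p : ℝ≥0∞)) ^ (k + 1) :=
          tsum_pi_prod fun (p : ↥S) (k : ℕ) => ((q (↑p : ℕ) : ℝ≥0∞)) ^ (k + 1)
      _ = ∏ p : ↥S, ((1 : ℝ≥0∞) - q p)⁻¹ * (q p) := by
          refine Finset.prod_congr rfl fun p _ => ?_
          simp_rw [pow_succ]
          rw [ENNReal.tsum_mul_right, ENNReal.tsum_geometric]
      _ ≤ ∏ p : ↥S, ENNReal.ofReal (b p) :=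
          Finset.prod_le_prod' fun p _ => hfac p p.2
      _ = ENNReal.ofReal (∏ p : ↥S, b p) := by
          rw [ENNReal.ofReal_prod_of_nonneg fun (p : ↥S) _ => hb_nonneg (p : ℕ)]
      _ ≤ ENNReal.ofReal C := by
          apply ENNReal.ofReal_le_ofReal
          -- real product bound
          rw [Finset.prod_coe_sort S b]
          have hsplit : ∏ p ∈ S, b p
              = (2 / ε) ^ (S.filter (fun p : ℕ => (p : ℝ) < 2 ^ (1 / ε))).card := by
            simp only [hb]
            rw [Finset.prod_ite, Finset.prod_const, Finset.prod_const_one, mul_one]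
          rw [hsplit]
          set T := S.filter (fun p : ℕ => (p : ℝ) < 2 ^ (1 / ε)) with hT
          have hx0 : (0 : ℝ) ≤ (2 : ℝ) ^ (1 / ε) := by positivity
          have hcard : (T.card : ℝ) ≤ (2 : ℝ) ^ (1 / ε) := by
            have hsub : T ⊆ Finset.Icc 1 ⌊(2 : ℝ) ^ (1 / ε)⌋₊ := by
              intro p hp
              rw [hT, Finset.mem_filter] at hp
              rw [Finset.mem_Icc]
              exact ⟨(hprime p hp.1).pos, Nat.le_floor hp.2.le⟩
            have h1 : T.card ≤ ⌊(2 : ℝ) ^ (1 / ε)⌋₊ := by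
              have := Finset.card_le_card hsub
              rwa [Nat.card_Icc, Nat.add_sub_cancel] at this
            calc (T.card : ℝ) ≤ (⌊(2 : ℝ) ^ (1 / ε)⌋₊ : ℝ) := by exact_mod_cast h1
              _ ≤ (2 : ℝ) ^ (1 / ε) := Nat.floor_le hx0
          have h2ε : (1 : ℝ) ≤ 2 / ε := by
            rw [le_div_iff₀ hε0]; linarith
          calc (2 / ε) ^ T.card = (2 / ε) ^ (T.card : ℝ) :=
                (Real.rpow_natCast _ _).symm
            _ ≤ (2 / ε) ^ ((2 : ℝ) ^ (1 / ε)) :=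
                Real.rpow_le_rpow_of_exponent_le h2ε hcard
            _ = C := rfl
  -- convert back to the real-valued tsum
  have hofr : ∀ n : {n : ℕ // 0 < n ∧ rad n = r},
      ENNReal.ofReal (((n : ℕ) : ℝ) ^ (-ε)) = (((n : ℕ) : ℝ≥0∞)) ^ (-ε) := by
    intro n
    rw [← ENNReal.ofReal_rpow_of_pos (by exact_mod_cast n.2.1), ENNReal.ofReal_natCast]
  have hnonneg : ∀ n : {n : ℕ // 0 < n ∧ rad n = r}, 0 ≤ ((n : ℕ) : ℝ) ^ (-ε) :=
    fun n => Real.rpow_nonneg (Nat.cast_nonneg _) _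
  have hsummable : Summable fun n : {n : ℕ // 0 < n ∧ rad n = r} => ((n : ℕ) : ℝ) ^ (-ε) := by
    have hne : ∑' n : {n : ℕ // 0 < n ∧ rad n = r}, (((n : ℕ) : ℝ≥0∞)) ^ (-ε) ≠ ⊤ :=
      (lt_of_le_of_lt key ENNReal.ofReal_lt_top).ne
    have h1 := ENNReal.summable_toReal hne
    refine h1.congr fun n => ?_
    rw [← hofr n, ENNReal.toReal_ofReal (hnonneg n)]
  have h2 : ENNReal.ofReal (∑' n : {n : ℕ // 0 < n ∧ rad n = r}, ((n : ℕ) : ℝ) ^ (-ε))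
      ≤ ENNReal.ofReal C := by
    rw [ENNReal.ofReal_tsum_of_nonneg hnonneg hsummable]
    simp_rw [hofr]
    exact key
  exact (ENNReal.ofReal_le_ofReal_iff hC0).mp h2
end

section
/- For every ε with 0 < ε < 1, every N ≥ 1, and every positive integer r, the number of positive integers n ≤ N with rad(n) = r is at most (2/ε)^(2^(1/ε)) · N^ε. -/
open Finset Real

private lemma geom_icc_le (x : ℝ) (h0 : 0 ≤ x) (h1 : x < 1) (N : ℕ) :
    ∑ a ∈ Finset.Icc 1 N, x ^ a ≤ x / (1 - x) := by
  have hins : Finset.range (N + 1) = insert 0 (Finset.Icc 1 N) := by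
    ext a
    simp only [Finset.mem_range, Finset.mem_insert, Finset.mem_Icc]
    omega
  have h0m : (0 : ℕ) ∉ Finset.Icc 1 N := by simp
  have hsum : ∑ a ∈ Finset.range (N + 1), x ^ a = 1 + ∑ a ∈ Finset.Icc 1 N, x ^ a := by
    rw [hins, Finset.sum_insert h0m, pow_zero]
  have hle : ∑ a ∈ Finset.range (N + 1), x ^ a ≤ (1 - x)⁻¹ := by
    have := Summable.sum_le_tsum (Finset.range (N + 1)) (fun i _ => pow_nonneg h0 i)
      (summable_geometric_of_lt_one h0 h1)
    rwa [tsum_geometric_of_lt_one h0 h1] at this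
  have h1x : (0 : ℝ) < 1 - x := by linarith
  have heq : (1 - x)⁻¹ - 1 = x / (1 - x) := by field_simp; ring
  linarith [hsum, hle, heq]

private lemma rpow_pow_comm (p : ℝ) (hp : 0 ≤ p) (a : ℕ) (e : ℝ) :
    (p ^ a) ^ e = (p ^ e) ^ a := by
  rw [← Real.rpow_natCast p a, ← Real.rpow_mul hp, mul_comm, Real.rpow_mul hp,
    Real.rpow_natCast]

theorem card_rad_eq_le (ε : ℝ) (hε0 : 0 < ε) (hε1 : ε < 1) (N : ℕ) (hN : 1 ≤ N) (r : ℕ) (hr : 0 < r) :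
    (((Finset.Icc 1 N).filter (fun n => rad n = r)).card : ℝ)
      ≤ (2 / ε) ^ ((2 : ℝ) ^ (1 / ε)) * (N : ℝ) ^ ε := by
  classical
  set P := r.primeFactors with hPdef
  set T := (Finset.Icc 1 N).filter (fun n => rad n = r) with hTdef
  -- Basic facts about members of T
  have hTmem : ∀ n ∈ T, 1 ≤ n ∧ n ≤ N ∧ n.primeFactors = P := by
    intro n hn
    simp only [hTdef, Finset.mem_filter, Finset.mem_Icc] at hn
    obtain ⟨⟨h1, h2⟩, h3⟩ := hn
    refine ⟨h1, h2, ?_⟩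
    have hradn : rad n = ∏ p ∈ n.primeFactors, p := by
      simp [rad]
    rw [hPdef, ← h3, hradn, Nat.primeFactors_prod
      (fun p hp => Nat.prime_of_mem_primeFactors hp)]
  -- reconstruction
  have hrecon : ∀ n ∈ T, n = ∏ p ∈ P, p ^ n.factorization p := by
    intro n hn
    obtain ⟨h1, _, hP⟩ := hTmem n hn
    conv_lhs => rw [← Nat.factorization_prod_pow_eq_self (Nat.one_le_iff_ne_zero.mp h1)]
    rw [Finsupp.prod, Nat.support_factorization, hP]
  -- exponents live in Icc 1 N
  have hexp : ∀ n ∈ T, ∀ p ∈ P, n.factorization p ∈ Finset.Icc 1 N := by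
    intro n hn p hp
    obtain ⟨h1, h2, hP⟩ := hTmem n hn
    have hn0 : n ≠ 0 := Nat.one_le_iff_ne_zero.mp h1
    have hpmem : p ∈ n.primeFactors := by rw [hP]; exact hp
    have hprime : p.Prime := Nat.prime_of_mem_primeFactors hpmem
    have hpos : 1 ≤ n.factorization p := by
      have : n.factorization p ≠ 0 := by
        have := hpmem
        rw [← Nat.support_factorization] at this
        exact Finsupp.mem_support_iff.mp this
      omega
    refine Finset.mem_Icc.mpr ⟨hpos, ?_⟩
    set a := n.factorization p with ha
    have hdvd : p ^ a ∣ n := Nat.ordProj_dvd n p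
    have hle : p ^ a ≤ n := Nat.le_of_dvd (Nat.pos_of_ne_zero hn0) hdvd
    have h2a : 2 ^ a ≤ p ^ a := Nat.pow_le_pow_left hprime.two_le a
    have : a < 2 ^ a := Nat.lt_two_pow_self
    omega
  -- the weight function
  set f : ℕ → ℕ → ℝ := fun p a => ((p : ℝ) ^ (-ε)) ^ a with hfdef
  -- pointwise expansion
  have hpoint : ∀ n ∈ T, ((n : ℝ)) ^ (-ε) = ∏ p ∈ P, f p (n.factorization p) := by
    intro n hn
    conv_lhs => rw [hrecon n hn]
    push_cast
    rw [← Real.finset_prod_rpow P _ (fun p _ => by positivity) (-ε)]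
    exact Finset.prod_congr rfl fun p _ => rpow_pow_comm _ (Nat.cast_nonneg p) _ _
  -- injection into Finset.pi
  set F : ℕ → (∀ p ∈ P, ℕ) := fun n => fun p _ => n.factorization p with hFdef
  set G : (∀ p ∈ P, ℕ) → ℝ := fun g => ∏ x ∈ P.attach, f x.1 (g x.1 x.2) with hGdef
  have hGF : ∀ n ∈ T, ((n : ℝ)) ^ (-ε) = G (F n) := by
    intro n hn
    rw [hpoint n hn, hGdef]
    exact (Finset.prod_attach P fun p => f p (n.factorization p)).symm
  have hinj : ∀ n₁ ∈ T, ∀ n₂ ∈ T, F n₁ = F n₂ → n₁ = n₂ := by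
    intro n₁ h₁ n₂ h₂ h
    rw [hrecon n₁ h₁, hrecon n₂ h₂]
    refine Finset.prod_congr rfl fun p hp => ?_
    have := congrFun (congrFun h p) hp
    simp only [hFdef] at this
    rw [this]
  have hGnonneg : ∀ g, 0 ≤ G g := by
    intro g
    refine Finset.prod_nonneg fun x _ => ?_
    positivity
  have hsub : T.image F ⊆ P.pi (fun _ => Finset.Icc 1 N) := by
    intro g hg
    obtain ⟨n, hn, rfl⟩ := Finset.mem_image.mp hg
    rw [Finset.mem_pi]
    intro p hp
    exact hexp n hn p hp
  -- the key inequality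
  have hkey : ∑ n ∈ T, ((n : ℝ)) ^ (-ε) ≤ ∏ p ∈ P, ∑ a ∈ Finset.Icc 1 N, f p a := by
    calc ∑ n ∈ T, ((n : ℝ)) ^ (-ε) = ∑ n ∈ T, G (F n) :=
          Finset.sum_congr rfl hGF
      _ = ∑ g ∈ T.image F, G g := (Finset.sum_image hinj).symm
      _ ≤ ∑ g ∈ P.pi (fun _ => Finset.Icc 1 N), G g :=
          Finset.sum_le_sum_of_subset_of_nonneg hsub (fun g _ _ => hGnonneg g)
      _ = ∏ p ∈ P, ∑ a ∈ Finset.Icc 1 N, f p a := (Finset.prod_sum _ _ _).symm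
  -- per-prime bound
  have hprime_bound : ∀ p ∈ P, ∑ a ∈ Finset.Icc 1 N, f p a ≤ ((p : ℝ) ^ ε - 1)⁻¹ := by
    intro p hp
    have hprime : p.Prime := Nat.prime_of_mem_primeFactors hp
    have hp1 : (1 : ℝ) < (p : ℝ) := by exact_mod_cast hprime.one_lt
    have hx0 : (0 : ℝ) ≤ (p : ℝ) ^ (-ε) := Real.rpow_nonneg (by positivity) _
    have hx1 : (p : ℝ) ^ (-ε) < 1 :=
      Real.rpow_lt_one_of_one_lt_of_neg hp1 (by linarith)
    have hy1 : (1 : ℝ) < (p : ℝ) ^ ε := Real.one_lt_rpow_iff_of_pos (by linarith) |>.mpr (Or.inl ⟨hp1, hε0⟩)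
    have := geom_icc_le ((p : ℝ) ^ (-ε)) hx0 hx1 N
    have heq : (p : ℝ) ^ (-ε) / (1 - (p : ℝ) ^ (-ε)) = ((p : ℝ) ^ ε - 1)⁻¹ := by
      rw [Real.rpow_neg (by positivity)]
      have hy0 : (0 : ℝ) < (p : ℝ) ^ ε := by linarith
      field_simp
    calc ∑ a ∈ Finset.Icc 1 N, f p a ≤ (p : ℝ) ^ (-ε) / (1 - (p : ℝ) ^ (-ε)) := this
      _ = ((p : ℝ) ^ ε - 1)⁻¹ := heq
  -- bound the product of inverse factors
  set M := Nat.floor ((2 : ℝ) ^ (1 / ε)) with hMdef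
  have hfac_pos : ∀ p ∈ P, (0 : ℝ) < ((p : ℝ) ^ ε - 1)⁻¹ := by
    intro p hp
    have hprime : p.Prime := Nat.prime_of_mem_primeFactors hp
    have hp1 : (1 : ℝ) < (p : ℝ) := by exact_mod_cast hprime.one_lt
    have hy1 : (1 : ℝ) < (p : ℝ) ^ ε := Real.one_lt_rpow_iff_of_pos (by linarith) |>.mpr (Or.inl ⟨hp1, hε0⟩)
    have : (0 : ℝ) < (p : ℝ) ^ ε - 1 := by linarith
    positivity
  have hlog2 : (1 / 2 : ℝ) ≤ Real.log 2 := by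
    have := Real.log_two_gt_d9
    linarith
  have htwo_rpow : (1 : ℝ) + ε / 2 ≤ (2 : ℝ) ^ ε := by
    have h1 : (2 : ℝ) ^ ε = Real.exp (Real.log 2 * ε) := by
      rw [Real.rpow_def_of_pos (by norm_num)]
    have h2 : Real.log 2 * ε + 1 ≤ Real.exp (Real.log 2 * ε) := Real.add_one_le_exp _
    have h3 : ε / 2 ≤ Real.log 2 * ε := by nlinarith
    rw [h1]; linarith
  have hfac_le : ∀ p ∈ P, ((p : ℝ) ^ ε - 1)⁻¹ ≤ 2 / ε := by
    intro p hp
    have hprime : p.Prime := Nat.prime_of_mem_primeFactors hp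
    have hp2 : (2 : ℝ) ≤ (p : ℝ) := by exact_mod_cast hprime.two_le
    have h2e : (2 : ℝ) ^ ε ≤ (p : ℝ) ^ ε :=
      Real.rpow_le_rpow (by norm_num) hp2 hε0.le
    have hlow : ε / 2 ≤ (p : ℝ) ^ ε - 1 := by linarith
    have hε2 : (0 : ℝ) < ε / 2 := by linarith
    calc ((p : ℝ) ^ ε - 1)⁻¹ ≤ (ε / 2)⁻¹ := by
          apply inv_anti₀ hε2 hlow
      _ = 2 / ε := by rw [inv_div]
  -- split into small and big primes
  set P₁ := P.filter (fun p : ℕ => ((p : ℝ)) ^ ε < 2) with hP₁def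
  have hsplit : ∏ p ∈ P, ((p : ℝ) ^ ε - 1)⁻¹ =
      (∏ p ∈ P₁, ((p : ℝ) ^ ε - 1)⁻¹) * ∏ p ∈ P.filter (fun p : ℕ => ¬ ((p : ℝ)) ^ ε < 2), ((p : ℝ) ^ ε - 1)⁻¹ :=
    (Finset.prod_filter_mul_prod_filter_not P _ _).symm
  have hbig_le_one : ∏ p ∈ P.filter (fun p : ℕ => ¬ ((p : ℝ)) ^ ε < 2), ((p : ℝ) ^ ε - 1)⁻¹ ≤ 1 := by
    apply Finset.prod_le_one
    · intro p hp
      exact (hfac_pos p (Finset.mem_filter.mp hp).1).le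
    · intro p hp
      obtain ⟨hpP, hp2⟩ := Finset.mem_filter.mp hp
      push_neg at hp2
      have : (1 : ℝ) ≤ (p : ℝ) ^ ε - 1 := by linarith
      exact inv_le_one_of_one_le₀ this
  -- card of P₁
  have hcard : (P₁.card : ℝ) ≤ (2 : ℝ) ^ (1 / ε) := by
    have hsub1 : P₁ ⊆ Finset.Icc 2 M := by
      intro p hp
      obtain ⟨hpP, hp2⟩ := Finset.mem_filter.mp hp
      have hprime : p.Prime := Nat.prime_of_mem_primeFactors hpP
      refine Finset.mem_Icc.mpr ⟨hprime.two_le, ?_⟩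
      apply Nat.le_floor
      have hlt : ((p : ℝ) ^ ε) ^ (1 / ε) < (2 : ℝ) ^ (1 / ε) :=
        Real.rpow_lt_rpow (Real.rpow_nonneg (Nat.cast_nonneg p) ε) hp2 (by positivity)
      have heq : ((p : ℝ) ^ ε) ^ (1 / ε) = (p : ℝ) := by
        rw [← Real.rpow_mul (Nat.cast_nonneg p), mul_one_div, div_self hε0.ne', Real.rpow_one]
      rw [heq] at hlt
      exact hlt.le
    have h1 : P₁.card ≤ (Finset.Icc 2 M).card := Finset.card_le_card hsub1
    have h2 : (Finset.Icc 2 M).card = M + 1 - 2 := Nat.card_Icc 2 M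
    have h3 : (M : ℝ) ≤ (2 : ℝ) ^ (1 / ε) := Nat.floor_le (by positivity)
    have h4 : P₁.card ≤ M := by omega
    calc (P₁.card : ℝ) ≤ (M : ℝ) := by exact_mod_cast h4
      _ ≤ (2 : ℝ) ^ (1 / ε) := h3
  have h2ε1 : (1 : ℝ) ≤ 2 / ε := by
    rw [le_div_iff₀ hε0]
    linarith
  have hsmall : ∏ p ∈ P₁, ((p : ℝ) ^ ε - 1)⁻¹ ≤ (2 / ε) ^ ((2 : ℝ) ^ (1 / ε)) := by
    calc ∏ p ∈ P₁, ((p : ℝ) ^ ε - 1)⁻¹ ≤ ∏ _p ∈ P₁, (2 / ε) :=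
          Finset.prod_le_prod (fun p hp => (hfac_pos p (Finset.mem_filter.mp hp).1).le)
            (fun p hp => hfac_le p (Finset.mem_filter.mp hp).1)
      _ = (2 / ε) ^ (P₁.card) := by rw [Finset.prod_const]
      _ = (2 / ε) ^ ((P₁.card : ℝ)) := (Real.rpow_natCast _ _).symm
      _ ≤ (2 / ε) ^ ((2 : ℝ) ^ (1 / ε)) :=
          Real.rpow_le_rpow_of_exponent_le h2ε1 hcard
  have hC0 : (0 : ℝ) < (2 / ε) ^ ((2 : ℝ) ^ (1 / ε)) := Real.rpow_pos_of_pos (by positivity) _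
  have hprod_le : ∏ p ∈ P, ((p : ℝ) ^ ε - 1)⁻¹ ≤ (2 / ε) ^ ((2 : ℝ) ^ (1 / ε)) := by
    rw [hsplit]
    calc (∏ p ∈ P₁, ((p : ℝ) ^ ε - 1)⁻¹) * ∏ p ∈ P.filter (fun p : ℕ => ¬ ((p : ℝ)) ^ ε < 2), ((p : ℝ) ^ ε - 1)⁻¹
        ≤ (∏ p ∈ P₁, ((p : ℝ) ^ ε - 1)⁻¹) * 1 := by
          apply mul_le_mul_of_nonneg_left hbig_le_one
          exact Finset.prod_nonneg fun p hp => (hfac_pos p (Finset.mem_filter.mp hp).1).le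
      _ = ∏ p ∈ P₁, ((p : ℝ) ^ ε - 1)⁻¹ := mul_one _
      _ ≤ (2 / ε) ^ ((2 : ℝ) ^ (1 / ε)) := hsmall
  -- assemble with Rankin's trick
  have hNε : (0 : ℝ) ≤ (N : ℝ) ^ ε := Real.rpow_nonneg (Nat.cast_nonneg N) ε
  have hrankin : (T.card : ℝ) ≤ (N : ℝ) ^ ε * ∑ n ∈ T, ((n : ℝ)) ^ (-ε) := by
    rw [Finset.mul_sum]
    calc (T.card : ℝ) = ∑ _n ∈ T, (1 : ℝ) := by rw [Finset.sum_const]; simp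
      _ ≤ ∑ n ∈ T, (N : ℝ) ^ ε * ((n : ℝ)) ^ (-ε) := by
          apply Finset.sum_le_sum
          intro n hn
          obtain ⟨h1, h2, _⟩ := hTmem n hn
          have hn0 : (0 : ℝ) < (n : ℝ) := by exact_mod_cast h1
          have hnε : (0 : ℝ) < (n : ℝ) ^ ε := Real.rpow_pos_of_pos hn0 ε
          have hle : (n : ℝ) ^ ε ≤ (N : ℝ) ^ ε :=
            Real.rpow_le_rpow hn0.le (by exact_mod_cast h2) hε0.le
          rw [Real.rpow_neg hn0.le, ← div_eq_mul_inv, le_div_iff₀ hnε, one_mul]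
          exact hle
  have hsum_le : ∑ n ∈ T, ((n : ℝ)) ^ (-ε) ≤ (2 / ε) ^ ((2 : ℝ) ^ (1 / ε)) := by
    calc ∑ n ∈ T, ((n : ℝ)) ^ (-ε) ≤ ∏ p ∈ P, ∑ a ∈ Finset.Icc 1 N, f p a := hkey
      _ ≤ ∏ p ∈ P, ((p : ℝ) ^ ε - 1)⁻¹ := by
          apply Finset.prod_le_prod
          · intro p hp
            apply Finset.sum_nonneg
            intro a _
            simp only [hfdef]
            positivity
          · exact hprime_bound
      _ ≤ (2 / ε) ^ ((2 : ℝ) ^ (1 / ε)) := hprod_le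
  calc (T.card : ℝ) ≤ (N : ℝ) ^ ε * ∑ n ∈ T, ((n : ℝ)) ^ (-ε) := hrankin
    _ ≤ (N : ℝ) ^ ε * ((2 / ε) ^ ((2 : ℝ) ^ (1 / ε))) :=
        mul_le_mul_of_nonneg_left hsum_le hNε
    _ = (2 / ε) ^ ((2 : ℝ) ^ (1 / ε)) * (N : ℝ) ^ ε := mul_comm _ _
end

section
/- For every ε > 0 there exists C_ε > 0 such that for all N ≥ 1 and all r, the set {n ≤ N : rad(n) = r} has cardinality at most C_ε · N^ε. -/
private lemma geom_aux (y : ℝ) (h0 : 0 ≤ y) (h1 : y < 1) (N : ℕ) :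
    ∑ a ∈ Finset.Icc 1 N, y ^ a ≤ y / (1 - y) := by
  have hy1 : (0:ℝ) < 1 - y := by linarith
  have h2 : ∑ a ∈ Finset.Icc 1 N, y ^ a = y * ∑ i ∈ Finset.range N, y ^ i := by
    rw [Finset.mul_sum, show Finset.Icc 1 N = Finset.Ico 1 (N+1) from (Finset.Ico_add_one_right_eq_Icc 1 N).symm,
      Finset.sum_Ico_eq_sum_range]
    simp [pow_add]
  have h3 : ∑ i ∈ Finset.range N, y ^ i ≤ 1 / (1 - y) := by
    rw [geom_sum_eq (by linarith : y ≠ 1)]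
    have h4 : (y ^ N - 1) / (y - 1) = (1 - y ^ N) / (1 - y) := by
      rw [← neg_div_neg_eq]; ring_nf
    rw [h4, div_le_div_iff₀ hy1 hy1]
    have : (0:ℝ) ≤ y ^ N := pow_nonneg h0 N
    nlinarith
  calc ∑ a ∈ Finset.Icc 1 N, y ^ a = y * ∑ i ∈ Finset.range N, y ^ i := h2
    _ ≤ y * (1 / (1 - y)) := mul_le_mul_of_nonneg_left h3 h0
    _ = y / (1 - y) := by rw [mul_one_div]

theorem card_rad_eq_le_uniform (ε : ℝ) (hε : 0 < ε) :
    ∃ C : ℝ, 0 < C ∧ ∀ N : ℕ, 1 ≤ N → ∀ r : ℕ,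
      (((Finset.Icc 1 N).filter (fun n => rad n = r)).card : ℝ) ≤ C * (N : ℝ) ^ ε := by
  classical
  set c : ℝ := max 1 (((2:ℝ) ^ ε - 1)⁻¹) with hc_def
  set B : ℕ := ⌈(2:ℝ) ^ (1/ε)⌉₊ with hB_def
  have hc1 : (1:ℝ) ≤ c := le_max_left _ _
  have h2e : (1:ℝ) < (2:ℝ) ^ ε := Real.one_lt_rpow (by norm_num) hε
  refine ⟨c ^ (B + 1), pow_pos (lt_of_lt_of_le one_pos hc1) _, ?_⟩
  intro N hN r
  set S := (Finset.Icc 1 N).filter (fun n => rad n = r) with hS_def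
  set s := r.primeFactors with hs_def
  -- basic facts about elements of S
  have hmem : ∀ n ∈ S, 1 ≤ n ∧ n ≤ N ∧ rad n = r := by
    intro n hn
    simp only [hS_def, Finset.mem_filter, Finset.mem_Icc] at hn
    exact ⟨hn.1.1, hn.1.2, hn.2⟩
  have hps : ∀ n ∈ S, s = n.primeFactors := by
    intro n hn
    have hr := (hmem n hn).2.2
    rw [hs_def, ← hr]
    show (n.primeFactors.prod id).primeFactors = n.primeFactors
    rw [show n.primeFactors.prod id = ∏ p ∈ n.primeFactors, p from rfl]
    exact Nat.primeFactors_prod (fun p hp => Nat.prime_of_mem_primeFactors hp)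
  have hrep : ∀ n ∈ S, n = ∏ p ∈ s, p ^ n.factorization p := by
    intro n hn
    have hn0 : n ≠ 0 := by have := (hmem n hn).1; omega
    rw [hps n hn]
    conv_lhs => rw [← Nat.factorization_prod_pow_eq_self hn0]
    rfl
  have hprimes : ∀ p ∈ s, 2 ≤ p := fun p hp => (Nat.prime_of_mem_primeFactors hp).two_le
  have hpe : ∀ p ∈ s, (1:ℝ) < (p:ℝ) ^ ε := by
    intro p hp
    exact Real.one_lt_rpow (by exact_mod_cast Nat.lt_of_lt_of_le one_lt_two (hprimes p hp)) hε
  -- the exponent map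
  set e : ∀ n : ℕ, (∀ p ∈ s, ℕ) := fun n => fun p _ => n.factorization p with he_def
  set t : ℕ → Finset ℕ := fun _ => Finset.Icc 1 N with ht_def
  set g : (∀ p ∈ s, ℕ) → ℝ := fun x => ∏ p ∈ s.attach, (((p.1:ℝ) ^ ε)⁻¹) ^ (x p.1 p.2) with hg_def
  have hval : ∀ n ∈ S, g (e n) = ((n:ℝ) ^ ε)⁻¹ := by
    intro n hn
    have hrepn := hrep n hn
    have hcast : (n:ℝ) = ∏ p ∈ s, (p:ℝ) ^ (n.factorization p) := by
      exact_mod_cast congrArg (fun m : ℕ => (m:ℝ)) hrepn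
    have hpow : (n:ℝ) ^ ε = ∏ p ∈ s, ((p:ℝ) ^ ε) ^ (n.factorization p) := by
      rw [hcast, ← Real.finset_prod_rpow s _ (fun p _ => by positivity) ε]
      refine Finset.prod_congr rfl (fun p hp => ?_)
      rw [← Real.rpow_natCast ((p:ℝ)) (n.factorization p), ← Real.rpow_mul (by positivity),
        mul_comm, Real.rpow_mul (by positivity), Real.rpow_natCast]
    rw [hg_def]
    simp only
    rw [Finset.prod_attach s (fun p => (((p:ℝ) ^ ε)⁻¹) ^ (n.factorization p)), hpow,
      ← Finset.prod_inv_distrib]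
    exact Finset.prod_congr rfl (fun p _ => inv_pow _ _)
  have hinj : ∀ x ∈ S, ∀ y ∈ S, e x = e y → x = y := by
    intro a ha b hb hab
    rw [hrep a ha, hrep b hb]
    refine Finset.prod_congr rfl (fun p hp => ?_)
    have := congrFun (congrFun hab p) hp
    simp only [he_def] at this
    rw [this]
  have himg : ∀ n ∈ S, e n ∈ s.pi t := by
    intro n hn
    rw [Finset.mem_pi]
    intro p hp
    have h1 : 1 ≤ n.factorization p := by
      have : p ∈ n.primeFactors := by rw [← hps n hn]; exact hp
      have := Nat.Prime.factorization_pos_of_dvd (Nat.prime_of_mem_primeFactors this)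
        (by have := (hmem n hn).1; omega) (Nat.dvd_of_mem_primeFactors this)
      omega
    have h2 : n.factorization p ≤ N := by
      have := Nat.factorization_lt p (show n ≠ 0 by have := (hmem n hn).1; omega)
      have := (hmem n hn).2.1
      omega
    simp only [ht_def, Finset.mem_Icc, he_def]
    exact ⟨h1, by simpa using h2⟩
  have hgnonneg : ∀ x, 0 ≤ g x := by
    intro x
    exact Finset.prod_nonneg (fun p _ => pow_nonneg (by positivity) _)
  -- Step B: sum over S bounded by product of geometric sums
  have hkey : ∑ n ∈ S, ((n:ℝ) ^ ε)⁻¹ ≤ ∏ p ∈ s, ∑ a ∈ Finset.Icc 1 N, (((p:ℝ) ^ ε)⁻¹) ^ a := by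
    rw [Finset.prod_sum]
    calc ∑ n ∈ S, ((n:ℝ) ^ ε)⁻¹ = ∑ n ∈ S, g (e n) :=
          Finset.sum_congr rfl (fun n hn => (hval n hn).symm)
      _ = ∑ x ∈ S.image e, g x := (Finset.sum_image hinj).symm
      _ ≤ ∑ x ∈ s.pi t, g x := by
          refine Finset.sum_le_sum_of_subset_of_nonneg ?_ (fun x _ _ => hgnonneg x)
          intro x hx
          rw [Finset.mem_image] at hx
          obtain ⟨n, hn, rfl⟩ := hx
          exact himg n hn
      _ = ∑ x ∈ s.pi t, ∏ p ∈ s.attach, (((p.1:ℝ) ^ ε)⁻¹) ^ (x p.1 p.2) := rfl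
  -- each geometric factor
  have hfac : ∀ p ∈ s, ∑ a ∈ Finset.Icc 1 N, (((p:ℝ) ^ ε)⁻¹) ^ a ≤ ((p:ℝ) ^ ε - 1)⁻¹ := by
    intro p hp
    have h1 := hpe p hp
    have hy0 : (0:ℝ) ≤ ((p:ℝ) ^ ε)⁻¹ := by positivity
    have hy1 : ((p:ℝ) ^ ε)⁻¹ < 1 := inv_lt_one_of_one_lt₀ h1
    calc ∑ a ∈ Finset.Icc 1 N, (((p:ℝ) ^ ε)⁻¹) ^ a ≤
          ((p:ℝ) ^ ε)⁻¹ / (1 - ((p:ℝ) ^ ε)⁻¹) := geom_aux _ hy0 hy1 N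
      _ = ((p:ℝ) ^ ε - 1)⁻¹ := by
          have ht : ((p:ℝ) ^ ε) ≠ 0 := by positivity
          have hd : 1 - ((p:ℝ) ^ ε)⁻¹ ≠ 0 := ne_of_gt (by linarith)
          have ht1 : ((p:ℝ) ^ ε - 1) ≠ 0 := ne_of_gt (by linarith)
          field_simp
  -- product bound
  have hprodbound : ∏ p ∈ s, ((p:ℝ) ^ ε - 1)⁻¹ ≤ c ^ (B + 1) := by
    have hpos : ∀ p ∈ s, (0:ℝ) < ((p:ℝ) ^ ε - 1)⁻¹ := by
      intro p hp; have := hpe p hp; exact inv_pos.mpr (by linarith)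
    rw [← Finset.prod_filter_mul_prod_filter_not s (· ≤ B) (fun p => ((p:ℝ) ^ ε - 1)⁻¹)]
    have hbig : ∏ p ∈ s.filter (fun p => ¬ p ≤ B), ((p:ℝ) ^ ε - 1)⁻¹ ≤ 1 := by
      refine Finset.prod_le_one (fun p hp => le_of_lt (hpos p (Finset.mem_filter.mp hp).1)) ?_
      intro p hp
      rw [Finset.mem_filter] at hp
      have hpB : B < p := by omega
      have h2p : (2:ℝ) ^ ((1:ℝ)/ε) ≤ (p:ℝ) := by
        calc (2:ℝ) ^ ((1:ℝ)/ε) ≤ (B:ℕ) := Nat.le_ceil _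
          _ ≤ (p:ℝ) := by exact_mod_cast hpB.le
      have h2 : (2:ℝ) ≤ (p:ℝ) ^ ε := by
        calc (2:ℝ) = ((2:ℝ) ^ ((1:ℝ)/ε)) ^ ε := by
              rw [← Real.rpow_mul (by norm_num), one_div, inv_mul_cancel₀ hε.ne', Real.rpow_one]
          _ ≤ (p:ℝ) ^ ε := Real.rpow_le_rpow (by positivity) h2p hε.le
      rw [inv_le_one_iff₀]
      right; linarith
    have hsmall : ∏ p ∈ s.filter (fun p => p ≤ B), ((p:ℝ) ^ ε - 1)⁻¹ ≤ c ^ (B + 1) := by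
      have hstep : ∏ p ∈ s.filter (fun p => p ≤ B), ((p:ℝ) ^ ε - 1)⁻¹ ≤
          ∏ _p ∈ s.filter (fun p => p ≤ B), c := by
        refine Finset.prod_le_prod (fun p hp => le_of_lt (hpos p (Finset.mem_filter.mp hp).1)) ?_
        intro p hp
        rw [Finset.mem_filter] at hp
        have hp2 : (2:ℝ) ≤ (p:ℝ) := by exact_mod_cast hprimes p hp.1
        have h2 : (2:ℝ) ^ ε ≤ (p:ℝ) ^ ε := Real.rpow_le_rpow (by norm_num) hp2 hε.le
        calc ((p:ℝ) ^ ε - 1)⁻¹ ≤ ((2:ℝ) ^ ε - 1)⁻¹ := by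
              apply inv_anti₀ (by linarith) (by linarith)
          _ ≤ c := le_max_right _ _
      rw [Finset.prod_const] at hstep
      refine hstep.trans (pow_le_pow_right₀ hc1 ?_)
      calc (s.filter (fun p => p ≤ B)).card ≤ (Finset.range (B+1)).card := by
            refine Finset.card_le_card ?_
            intro p hp
            rw [Finset.mem_filter] at hp
            rw [Finset.mem_range]
            omega
        _ = B + 1 := Finset.card_range _
    calc (∏ p ∈ s.filter (fun p => p ≤ B), ((p:ℝ) ^ ε - 1)⁻¹) *
          ∏ p ∈ s.filter (fun p => ¬ p ≤ B), ((p:ℝ) ^ ε - 1)⁻¹ ≤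
          (c ^ (B+1)) * 1 := by
          refine mul_le_mul hsmall hbig ?_ (by positivity)
          exact Finset.prod_nonneg (fun p hp => le_of_lt (hpos p (Finset.mem_filter.mp hp).1))
      _ = c ^ (B+1) := mul_one _
  -- Step A: card bounded by weighted sum
  have hA : (S.card : ℝ) ≤ (N:ℝ) ^ ε * ∑ n ∈ S, ((n:ℝ) ^ ε)⁻¹ := by
    rw [Finset.mul_sum]
    calc (S.card : ℝ) = ∑ _n ∈ S, (1:ℝ) := by rw [Finset.sum_const]; simp
      _ ≤ ∑ n ∈ S, (N:ℝ) ^ ε * ((n:ℝ) ^ ε)⁻¹ := by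
          refine Finset.sum_le_sum (fun n hn => ?_)
          obtain ⟨h1, h2, _⟩ := hmem n hn
          have hn0 : (0:ℝ) < (n:ℝ) := by exact_mod_cast h1
          have hdiv : (1:ℝ) ≤ (N:ℝ) / (n:ℝ) := by
            rw [le_div_iff₀ hn0]; simpa using (by exact_mod_cast h2 : (n:ℝ) ≤ (N:ℝ))
          calc (1:ℝ) ≤ ((N:ℝ) / (n:ℝ)) ^ ε := Real.one_le_rpow hdiv hε.le
            _ = (N:ℝ) ^ ε * ((n:ℝ) ^ ε)⁻¹ := by
                rw [Real.div_rpow (by positivity) hn0.le, div_eq_mul_inv]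
  -- combine
  have hsum : ∑ n ∈ S, ((n:ℝ) ^ ε)⁻¹ ≤ c ^ (B + 1) := by
    refine hkey.trans (le_trans (Finset.prod_le_prod ?_ hfac) hprodbound)
    intro p hp
    exact Finset.sum_nonneg (fun a _ => pow_nonneg (by positivity) _)
  calc (S.card : ℝ) ≤ (N:ℝ) ^ ε * ∑ n ∈ S, ((n:ℝ) ^ ε)⁻¹ := hA
    _ ≤ (N:ℝ) ^ ε * c ^ (B + 1) := by
        refine mul_le_mul_of_nonneg_left hsum (Real.rpow_nonneg (by positivity) ε)
    _ = c ^ (B + 1) * (N:ℝ) ^ ε := mul_comm _ _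
end

section
/- For every ε > 0 there exists C_ε > 0 such that for all N ≥ 1 and all real λ ∈ [0,1], the number of positive integers n ≤ N with rad(n) ≤ N^λ is at most C_ε · N^(λ+ε). -/
open Finset

namespace RadAux

def apart (k i n : ℕ) : ℕ := ∏ p ∈ n.primeFactors.filter (fun p => n.factorization p % k = i), p

def bpart (k n : ℕ) : ℕ := ∏ p ∈ n.primeFactors, p ^ (n.factorization p / k)

lemma apart_pos (k i n : ℕ) : 0 < apart k i n :=
  Finset.prod_pos fun p hp => (Nat.prime_of_mem_primeFactors (Finset.mem_filter.mp hp).1).pos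

lemma bpart_pos (k n : ℕ) : 0 < bpart k n :=
  Finset.prod_pos fun p hp => pow_pos (Nat.prime_of_mem_primeFactors hp).pos _

lemma rad_pos (n : ℕ) : 0 < rad n :=
  Finset.prod_pos fun p hp => (Nat.prime_of_mem_primeFactors hp).pos

lemma prod_apart (k n : ℕ) (hk : 0 < k) : ∏ i ∈ Finset.range k, apart k i n = rad n := by
  unfold apart rad
  exact Finset.prod_fiberwise_of_maps_to (fun p _ => Finset.mem_range.mpr (Nat.mod_lt _ hk))
    (fun p => p)

lemma recon (k n : ℕ) (hk : 0 < k) (hn : n ≠ 0) :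
    (∏ i ∈ Finset.Ico 1 k, apart k i n ^ i) * bpart k n ^ k = n := by
  have h1 : ∏ i ∈ Finset.range k, apart k i n ^ i
      = ∏ p ∈ n.primeFactors, p ^ (n.factorization p % k) := by
    rw [← Finset.prod_fiberwise_of_maps_to
      (fun p _ => Finset.mem_range.mpr (Nat.mod_lt _ hk))
      (fun p => p ^ (n.factorization p % k))]
    refine Finset.prod_congr rfl fun i _ => ?_
    rw [apart, ← Finset.prod_pow]
    exact Finset.prod_congr rfl fun p hp => by
      rw [(Finset.mem_filter.mp hp).2]
  have h2 : bpart k n ^ k = ∏ p ∈ n.primeFactors, p ^ (k * (n.factorization p / k)) := by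
    rw [bpart, ← Finset.prod_pow]
    exact Finset.prod_congr rfl fun p _ => by rw [← pow_mul, mul_comm]
  have h3 : ∏ i ∈ Finset.range k, apart k i n ^ i = ∏ i ∈ Finset.Ico 1 k, apart k i n ^ i := by
    rw [Finset.range_eq_Ico, Finset.prod_eq_prod_Ico_succ_bot hk, pow_zero, one_mul]
  rw [← h3, h1, h2, ← Finset.prod_mul_distrib]
  conv_rhs => rw [← Nat.factorization_prod_pow_eq_self hn]
  rw [Finsupp.prod, Nat.support_factorization]
  exact Finset.prod_congr rfl fun p _ => by rw [← pow_add, Nat.mod_add_div]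

lemma fin_prod_eq (k : ℕ) (h : ℕ → ℕ) :
    ∏ j : Fin (k-1), h (j.1+1) = ∏ i ∈ Finset.Ico 1 k, h i := by
  rw [Fin.prod_univ_eq_prod_range (fun j => h (j+1)) (k-1), Finset.prod_Ico_eq_prod_range]
  exact Finset.prod_congr rfl fun i _ => by rw [add_comm]

def Tup (j A : ℕ) : Finset (Fin j → ℕ) :=
  (Fintype.piFinset fun _ => Finset.Icc 1 A).filter fun f => ∏ i, f i ≤ A

lemma one_add_log_nat_nonneg (m : ℕ) : (0:ℝ) ≤ 1 + Real.log m :=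
  add_nonneg zero_le_one (Real.log_natCast_nonneg m)

lemma log_nat_mono {m n : ℕ} (h : m ≤ n) : Real.log m ≤ Real.log n := by
  rcases Nat.eq_zero_or_pos m with h0 | h0
  · simp [h0, Real.log_natCast_nonneg]
  · exact Real.log_le_log (by exact_mod_cast h0) (by exact_mod_cast h)

lemma tup_card (j : ℕ) : ∀ A : ℕ, ((Tup j A).card : ℝ) ≤ A * (1 + Real.log A) ^ j := by
  induction j with
  | zero =>
    intro A
    rcases Nat.eq_zero_or_pos A with h0 | h0
    · have : Tup 0 0 = ∅ := by
        ext f; simp [Tup]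
      simp [h0, this]
    · have : (Tup 0 A).card ≤ 1 := by
        apply Finset.card_le_one.mpr
        intro f _ g _
        ext i; exact absurd i.2 (Nat.not_lt_zero _)
      calc ((Tup 0 A).card : ℝ) ≤ 1 := by exact_mod_cast this
        _ ≤ A * (1 + Real.log A) ^ 0 := by
            simpa using (show (1:ℝ) ≤ A by exact_mod_cast h0)
  | succ j ih =>
    intro A
    have key : (Tup (j+1) A).card = ∑ a ∈ Finset.Icc 1 A, ((Tup (j+1) A).filter
        (fun f => f 0 = a)).card := by
      apply Finset.card_eq_sum_card_fiberwise
      intro f hf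
      simp only [Tup, Finset.mem_coe, Finset.mem_filter, Fintype.mem_piFinset] at hf
      exact hf.1 0
    have fiber_le : ∀ a ∈ Finset.Icc 1 A, (((Tup (j+1) A).filter (fun f => f 0 = a)).card : ℝ)
        ≤ (Tup j (A / a)).card := by
      intro a ha
      have ha1 : 1 ≤ a := (Finset.mem_Icc.mp ha).1
      norm_cast
      apply Finset.card_le_card_of_injOn (fun f => Fin.tail f)
      · intro f hf
        simp only [Tup, Finset.mem_coe, Finset.mem_filter, Fintype.mem_piFinset, Finset.mem_Icc] at hf ⊢
        obtain ⟨⟨hmem, hprod⟩, h0⟩ := hf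
        have hpos : ∀ i, 1 ≤ f i := fun i => (hmem i).1
        have hsplit : f 0 * ∏ i, Fin.tail f i = ∏ i, f i := (Fin.prod_univ_succ f).symm
        have htail_le : ∏ i, Fin.tail f i ≤ A / a := by
          refine (Nat.le_div_iff_mul_le ha1).mpr ?_
          have heq : (∏ i, Fin.tail f i) * a = ∏ i, f i := by
            rw [← h0, mul_comm]; exact hsplit
          rw [heq]; exact hprod
        refine ⟨fun i => ⟨hpos _, ?_⟩, htail_le⟩
        exact le_trans (Finset.single_le_prod' (f := Fin.tail f)
          (fun b _ => hpos b.succ) (Finset.mem_univ i)) htail_le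
      · intro f hf g hg hfg
        simp only [Tup, Finset.mem_coe, Finset.mem_filter] at hf hg
        have : f 0 = g 0 := hf.2.trans hg.2.symm
        funext i
        refine Fin.cases ?_ ?_ i
        · exact this
        · intro i; exact congrFun hfg i
    have hdiv : ∀ a ∈ Finset.Icc 1 A, ((Tup j (A / a)).card : ℝ)
        ≤ (A / (a:ℝ)) * (1 + Real.log A) ^ j := by
      intro a ha
      have ha1 : 1 ≤ a := (Finset.mem_Icc.mp ha).1
      refine le_trans (ih (A / a)) ?_
      have h1 : ((A / a : ℕ) : ℝ) ≤ (A : ℝ) / a := Nat.cast_div_le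
      have h2 : (1 + Real.log (A / a : ℕ)) ^ j ≤ (1 + Real.log A) ^ j := by
        apply pow_le_pow_left₀ (one_add_log_nat_nonneg _)
        exact add_le_add_right (log_nat_mono (Nat.div_le_self _ _)) 1
      exact mul_le_mul h1 h2 (pow_nonneg (one_add_log_nat_nonneg _) _) (by positivity)
    calc ((Tup (j+1) A).card : ℝ)
        = ∑ a ∈ Finset.Icc 1 A, (((Tup (j+1) A).filter (fun f => f 0 = a)).card : ℝ) := by
          rw [key]; push_cast; ring
      _ ≤ ∑ a ∈ Finset.Icc 1 A, (A / (a:ℝ)) * (1 + Real.log A) ^ j :=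
          Finset.sum_le_sum fun a ha => le_trans (fiber_le a ha) (hdiv a ha)
      _ = (A * (1 + Real.log A) ^ j) * ∑ a ∈ Finset.Icc 1 A, (a:ℝ)⁻¹ := by
          rw [Finset.mul_sum]; exact Finset.sum_congr rfl fun a _ => by ring
      _ ≤ (A * (1 + Real.log A) ^ j) * (1 + Real.log A) := by
          apply mul_le_mul_of_nonneg_left _ (by positivity)
          have := harmonic_le_one_add_log A
          rw [harmonic_eq_sum_Icc] at this
          push_cast at this
          exact this
      _ = A * (1 + Real.log A) ^ (j+1) := by ring

end RadAux

open RadAux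

theorem card_rad_le_pow (ε : ℝ) (hε : 0 < ε) :
    ∃ C : ℝ, 0 < C ∧ ∀ N : ℕ, 1 ≤ N → ∀ lam : ℝ, 0 ≤ lam → lam ≤ 1 →
      (((Finset.Icc 1 N).filter (fun n => (rad n : ℝ) ≤ (N : ℝ) ^ lam)).card : ℝ)
        ≤ C * (N : ℝ) ^ (lam + ε) := by
  set k : ℕ := ⌈2/ε⌉₊ + 2 with hkdef
  have hk2 : 2 ≤ k := by omega
  have hkpos : 0 < k := by omega
  have hkR : 2 / ε ≤ (k:ℝ) := le_trans (Nat.le_ceil _) (by push_cast [hkdef]; linarith)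
  have hkRpos : (0:ℝ) < (k:ℝ) := by exact_mod_cast hkpos
  have hinvk : (k:ℝ)⁻¹ ≤ ε/2 := by
    rw [inv_le_iff_one_le_mul₀ hkRpos] at *
    · nlinarith [div_le_iff₀ hε |>.mp hkR]
  have hm1 : (1:ℝ) ≤ ((k-1 : ℕ):ℝ) := by
    have : 1 ≤ k - 1 := by omega
    exact_mod_cast this
  set δ : ℝ := ε / (2 * ((k-1 : ℕ):ℝ)) with hδdef
  have hδpos : 0 < δ := by positivity
  have hδk : δ * ((k-1:ℕ):ℝ) = ε/2 := by
    rw [hδdef]; field_simp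
  refine ⟨(1 + 1/δ)^(k-1), by positivity, ?_⟩
  intro N hN lam hlam0 hlam1
  have hN1 : (1:ℝ) ≤ (N:ℝ) := by exact_mod_cast hN
  have hNpos : (0:ℝ) < (N:ℝ) := by linarith
  set A₀ : ℕ := ⌊(N:ℝ)^lam⌋₊ with hA₀
  set B₀ : ℕ := ⌊(N:ℝ)^((k:ℝ)⁻¹)⌋₊ with hB₀
  set S := (Finset.Icc 1 N).filter (fun n => (rad n : ℝ) ≤ (N : ℝ) ^ lam) with hS
  set Bset := (Finset.Icc 1 N).filter (fun b => b^k ≤ N) with hBset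
  -- the injection
  have hcard1 : S.card ≤ (Tup (k-1) A₀ ×ˢ Bset).card := by
    apply Finset.card_le_card_of_injOn
      (fun n => (fun j : Fin (k-1) => apart k (j.1+1) n, bpart k n))
    · intro n hn
      simp only [hS, Finset.mem_coe, Finset.mem_filter, Finset.mem_Icc] at hn
      obtain ⟨⟨hn1, hnN⟩, hrad⟩ := hn
      have hn0 : n ≠ 0 := by omega
      have hradA : rad n ≤ A₀ := Nat.le_floor hrad
      have hIcoProd : ∏ i ∈ Finset.Ico 1 k, apart k i n ∣ rad n := by
        rw [← prod_apart k n hkpos]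
        exact Finset.prod_dvd_prod_of_subset _ _ _
          (by rw [Finset.range_eq_Ico]; exact Finset.Ico_subset_Ico (by omega) le_rfl)
      have hIcoLe : ∏ i ∈ Finset.Ico 1 k, apart k i n ≤ A₀ :=
        le_trans (Nat.le_of_dvd (rad_pos n) hIcoProd) hradA
      have hbdvd : bpart k n ^ k ∣ n := Dvd.intro_left _ (recon k n hkpos hn0)
      have hbkN : bpart k n ^ k ≤ N := le_trans (Nat.le_of_dvd (by omega) hbdvd) hnN
      rw [Finset.mem_coe, Finset.mem_product]
      constructor
      · simp only [Tup, Finset.mem_filter, Fintype.mem_piFinset, Finset.mem_Icc]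
        refine ⟨fun j => ⟨apart_pos _ _ _, ?_⟩, ?_⟩
        · have hmem : j.1 + 1 ∈ Finset.Ico 1 k := by
            simp only [Finset.mem_Ico]; omega
          exact le_trans (Nat.le_of_dvd (Finset.prod_pos fun i _ => apart_pos _ _ _)
            (Finset.dvd_prod_of_mem (fun i => apart k i n) hmem)) hIcoLe
        · rw [fin_prod_eq k (fun i => apart k i n)]; exact hIcoLe
      · simp only [hBset, Finset.mem_filter, Finset.mem_Icc]
        refine ⟨⟨bpart_pos k n, ?_⟩, hbkN⟩
        exact le_trans (Nat.le_self_pow (by omega) _) hbkN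
    · intro n₁ h₁ n₂ h₂ heq
      simp only [hS, Finset.coe_filter, Set.mem_setOf_eq, Finset.mem_Icc] at h₁ h₂
      have e₁ : (∏ j : Fin (k-1), apart k (j.1+1) n₁ ^ (j.1+1)) * bpart k n₁ ^ k = n₁ := by
        rw [fin_prod_eq k (fun i => apart k i n₁ ^ i)]
        exact recon k n₁ hkpos (by omega)
      have e₂ : (∏ j : Fin (k-1), apart k (j.1+1) n₂ ^ (j.1+1)) * bpart k n₂ ^ k = n₂ := by
        rw [fin_prod_eq k (fun i => apart k i n₂ ^ i)]
        exact recon k n₂ hkpos (by omega)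
      have hfst : ∀ j : Fin (k-1), apart k (j.1+1) n₁ = apart k (j.1+1) n₂ :=
        fun j => congrFun (congrArg Prod.fst heq) j
      have hsnd : bpart k n₁ = bpart k n₂ := congrArg Prod.snd heq
      rw [← e₁, ← e₂, hsnd]
      congr 1
      exact Finset.prod_congr rfl fun j _ => by rw [hfst j]
  -- counting the target
  have hBcard : (Bset.card : ℝ) ≤ (N:ℝ)^((k:ℝ)⁻¹) := by
    have hsub : Bset ⊆ Finset.Icc 1 B₀ := by
      intro b hb
      simp only [hBset, Finset.mem_filter, Finset.mem_Icc] at hb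
      obtain ⟨⟨hb1, _⟩, hbk⟩ := hb
      have hbR : ((b:ℝ))^(k:ℕ) ≤ (N:ℝ) := by exact_mod_cast hbk
      have : (b:ℝ) ≤ (N:ℝ)^((k:ℝ)⁻¹) := by
        have h1 : ((b:ℝ)^(k:ℕ))^((k:ℝ)⁻¹) ≤ (N:ℝ)^((k:ℝ)⁻¹) :=
          Real.rpow_le_rpow (by positivity) hbR (by positivity)
        rwa [← Real.rpow_natCast (b:ℝ) k, ← Real.rpow_mul (by positivity),
          mul_inv_cancel₀ (ne_of_gt hkRpos), Real.rpow_one] at h1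
      exact Finset.mem_Icc.mpr ⟨hb1, Nat.le_floor this⟩
    calc (Bset.card : ℝ) ≤ ((Finset.Icc 1 B₀).card : ℝ) := by
          exact_mod_cast Finset.card_le_card hsub
      _ ≤ (N:ℝ)^((k:ℝ)⁻¹) := by
          rw [Nat.card_Icc]
          simpa using Nat.floor_le (by positivity : (0:ℝ) ≤ (N:ℝ)^((k:ℝ)⁻¹))
  have hTcard : ((Tup (k-1) A₀).card : ℝ) ≤ (A₀:ℝ) * (1 + Real.log A₀) ^ (k-1) :=
    tup_card (k-1) A₀
  -- real estimates
  have hA₀le : (A₀:ℝ) ≤ (N:ℝ)^lam := Nat.floor_le (by positivity)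
  have hA₀N : A₀ ≤ N := by
    have h1 : (N:ℝ)^lam ≤ ((N:ℕ):ℝ) := by
      have := Real.rpow_le_rpow_of_exponent_le hN1 hlam1
      rwa [Real.rpow_one] at this
    calc A₀ ≤ ⌊((N:ℕ):ℝ)⌋₊ := Nat.floor_le_floor h1
      _ = N := Nat.floor_natCast N
  have hlogA : 1 + Real.log A₀ ≤ (1 + 1/δ) * (N:ℝ)^δ := by
    have h1 : Real.log A₀ ≤ Real.log N := log_nat_mono hA₀N
    have h2 : Real.log N ≤ (N:ℝ)^δ / δ := Real.log_le_rpow_div (by positivity) hδpos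
    have h3 : (1:ℝ) ≤ (N:ℝ)^δ := by
      have := Real.rpow_le_rpow_of_exponent_le hN1 (le_of_lt hδpos)
      rwa [Real.rpow_zero] at this
    calc 1 + Real.log A₀ ≤ (N:ℝ)^δ + (N:ℝ)^δ/δ := by linarith
      _ = (1 + 1/δ) * (N:ℝ)^δ := by field_simp
  have hpow : (1 + Real.log A₀) ^ (k-1) ≤ (1 + 1/δ)^(k-1) * (N:ℝ)^(ε/2) := by
    calc (1 + Real.log A₀) ^ (k-1) ≤ ((1 + 1/δ) * (N:ℝ)^δ) ^ (k-1) :=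
          pow_le_pow_left₀ (one_add_log_nat_nonneg _) hlogA _
      _ = (1 + 1/δ)^(k-1) * ((N:ℝ)^δ)^(k-1) := mul_pow _ _ _
      _ = (1 + 1/δ)^(k-1) * (N:ℝ)^(ε/2) := by
          rw [← Real.rpow_natCast ((N:ℝ)^δ) (k-1), ← Real.rpow_mul (le_of_lt hNpos), hδk]
  have hBpow : (N:ℝ)^((k:ℝ)⁻¹) ≤ (N:ℝ)^(ε/2) :=
    Real.rpow_le_rpow_of_exponent_le hN1 hinvk
  -- put it together
  calc (S.card : ℝ) ≤ ((Tup (k-1) A₀ ×ˢ Bset).card : ℝ) := by exact_mod_cast hcard1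
    _ = ((Tup (k-1) A₀).card : ℝ) * (Bset.card : ℝ) := by
        rw [Finset.card_product]; push_cast; ring
    _ ≤ ((A₀:ℝ) * (1 + Real.log A₀) ^ (k-1)) * (N:ℝ)^((k:ℝ)⁻¹) := by
        exact mul_le_mul hTcard hBcard (by positivity) (by positivity)
    _ ≤ ((N:ℝ)^lam * ((1 + 1/δ)^(k-1) * (N:ℝ)^(ε/2))) * (N:ℝ)^(ε/2) := by
        gcongr
    _ = (1 + 1/δ)^(k-1) * (N:ℝ)^(lam + ε) := by
        rw [show lam + ε = lam + ε/2 + ε/2 by ring, Real.rpow_add hNpos, Real.rpow_add hNpos]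
        ring
end

section
/- There exists a constant A > 0 such that τ(n) ≤ n^(A/log log n) for all integers n ≥ 3. -/
set_option maxHeartbeats 1000000

open Real Finset

private lemma log_succ_le_mul_log2 (a : ℕ) : Real.log (a + 1) ≤ a * Real.log 2 := by
  rw [← Real.log_pow]
  apply Real.log_le_log (by positivity)
  have := Nat.lt_two_pow_self (n := a)
  push_cast
  exact_mod_cast this

theorem divisor_bound_loglog :
    ∃ A : ℝ, 0 < A ∧ ∀ n : ℕ, 3 ≤ n →
      (n.divisors.card : ℝ) ≤ (n : ℝ) ^ (A / Real.log (Real.log n)) := by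
  refine ⟨32, by norm_num, fun n hn => ?_⟩
  have hn0 : n ≠ 0 := by omega
  have hn1 : (1 : ℝ) < n := by exact_mod_cast (by omega : 1 < n)
  have hn3 : (3 : ℝ) ≤ n := by exact_mod_cast hn
  set L : ℝ := Real.log n with hLdef
  set LL : ℝ := Real.log L with hLLdef
  have hL1 : 1 < L := by
    rw [hLdef, Real.lt_log_iff_exp_lt (by linarith)]
    calc Real.exp 1 < 2.7182818286 := Real.exp_one_lt_d9
    _ ≤ n := by linarith
  have hL0 : 0 < L := by linarith
  have hLL0 : 0 < LL := Real.log_pos hL1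
  have hτpos : 0 < (n.divisors.card : ℝ) := by
    have : n ∈ n.divisors := Nat.mem_divisors_self n hn0
    exact_mod_cast Finset.card_pos.mpr ⟨n, this⟩
  -- reduce to a log inequality
  have hrw : (n : ℝ) ^ (32 / LL) = Real.exp (32 / LL * L) := by
    rw [Real.rpow_def_of_pos (by linarith), mul_comm]
  by_cases hbig : LL < 32
  · -- small case: τ(n) ≤ n ≤ n^(16/LL)
    have hτn : (n.divisors.card : ℝ) ≤ n := by
      have : n.divisors.card ≤ n := by
        rw [Nat.divisors]
        calc (Finset.filter (fun i => i ∣ n) (Finset.Ico 1 (n+1))).card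
            ≤ (Finset.Ico 1 (n+1)).card := Finset.card_filter_le _ _
        _ = n := by simp
      exact_mod_cast this
    calc (n.divisors.card : ℝ) ≤ n := hτn
    _ = (n : ℝ) ^ (1 : ℝ) := (Real.rpow_one _).symm
    _ ≤ (n : ℝ) ^ (32 / LL) := by
        apply Real.rpow_le_rpow_of_exponent_le (le_of_lt hn1)
        rw [le_div_iff₀ hLL0]; linarith
  push_neg at hbig
  -- big case
  have hlogτ : Real.log (n.divisors.card) ≤ 4 * (L / LL) := by
    classical
    set y : ℝ := L / LL ^ 2 with hydef
    have hy0 : 0 < y := by positivity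
    have hlogLL : Real.log LL ≤ LL / 32 - 1 + 5 * Real.log 2 := by
      have h1 : Real.log (LL / 32) ≤ LL / 32 - 1 :=
        Real.log_le_sub_one_of_pos (by positivity)
      have h2 : Real.log (LL / 32) = Real.log LL - Real.log 32 :=
        Real.log_div (by positivity) (by norm_num)
      have h3 : Real.log 32 = 5 * Real.log 2 := by
        rw [show (32:ℝ) = 2 ^ 5 by norm_num, Real.log_pow]; push_cast; ring
      linarith
    have hlog2lt : Real.log 2 < 0.6931471808 := Real.log_two_lt_d9
    have hlog2gt : (0.6931471803 : ℝ) < Real.log 2 := Real.log_two_gt_d9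
    have hLLlog : 4 * Real.log LL ≤ LL / 2 := by nlinarith
    have hlogy : LL / 2 ≤ Real.log y := by
      rw [hydef, Real.log_div (by positivity) (by positivity), Real.log_pow]
      push_cast
      linarith
    have hlogy0 : 0 < Real.log y := by linarith
    -- the factorization
    have hLge : 33 ≤ L := by nlinarith [Real.log_le_sub_one_of_pos hL0]
    have hτeq : (n.divisors.card : ℝ) =
        ∏ p ∈ n.primeFactors, ((n.factorization p : ℝ) + 1) := by
      rw [Nat.card_divisors hn0, Nat.cast_prod]
      push_cast
      rfl
    have hlogsum : Real.log (n.divisors.card) =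
        ∑ p ∈ n.primeFactors, Real.log ((n.factorization p : ℝ) + 1) := by
      rw [hτeq, Real.log_prod]
      intro p hp
      positivity
    have hLsum : L = ∑ p ∈ n.primeFactors, (n.factorization p : ℝ) * Real.log p := by
      rw [hLdef, Real.log_nat_eq_sum_factorization, Finsupp.sum,
        n.support_factorization]
    set S := n.primeFactors.filter (fun p : ℕ => (p : ℝ) ≤ y) with hS
    set T := n.primeFactors.filter (fun p : ℕ => ¬ ((p : ℝ) ≤ y)) with hT
    have hsplit : ∑ p ∈ n.primeFactors, Real.log ((n.factorization p : ℝ) + 1)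
        = ∑ p ∈ S, Real.log ((n.factorization p : ℝ) + 1)
          + ∑ p ∈ T, Real.log ((n.factorization p : ℝ) + 1) :=
      (Finset.sum_filter_add_sum_filter_not _ _ _).symm
    -- bound on S
    have hScard : (S.card : ℝ) ≤ y := by
      have hsub : S ⊆ Finset.Icc 1 ⌊y⌋₊ := by
        intro p hp
        rw [hS, Finset.mem_filter] at hp
        rw [Finset.mem_Icc]
        exact ⟨(Nat.prime_of_mem_primeFactors hp.1).one_lt.le, Nat.le_floor hp.2⟩
      calc (S.card : ℝ) ≤ ((Finset.Icc 1 ⌊y⌋₊).card : ℝ) := by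
            exact_mod_cast Finset.card_le_card hsub
      _ = (⌊y⌋₊ : ℝ) := by rw [Nat.card_Icc]; simp
      _ ≤ y := Nat.floor_le hy0.le
    have hterm : ∀ p ∈ S, Real.log ((n.factorization p : ℝ) + 1) ≤ 2 * LL := by
      intro p hp
      rw [hS, Finset.mem_filter] at hp
      have hpp := Nat.prime_of_mem_primeFactors hp.1
      have hdvd : p ^ n.factorization p ∣ n := Nat.ordProj_dvd n p
      have h2a : (2 : ℝ) ^ (n.factorization p) ≤ n := by
        have : 2 ^ n.factorization p ≤ p ^ n.factorization p :=
          Nat.pow_le_pow_left hpp.two_le _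
        have := this.trans (Nat.le_of_dvd (by omega) hdvd)
        exact_mod_cast this
      have halog : (n.factorization p : ℝ) * Real.log 2 ≤ L := by
        rw [hLdef, ← Real.log_pow]
        exact Real.log_le_log (by positivity) h2a
      have haL : (n.factorization p : ℝ) ≤ L / Real.log 2 := by
        rw [le_div_iff₀ (by linarith)]; linarith
      calc Real.log ((n.factorization p : ℝ) + 1)
          ≤ Real.log (L ^ 2) := by
            apply Real.log_le_log (by positivity)
            nlinarith [haL, hlog2gt, hLge, hL0]
      _ = 2 * LL := by rw [Real.log_pow]; push_cast; rw [hLLdef]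
    have hSbound : ∑ p ∈ S, Real.log ((n.factorization p : ℝ) + 1)
        ≤ 2 * (L / LL) := by
      calc ∑ p ∈ S, Real.log ((n.factorization p : ℝ) + 1)
          ≤ ∑ _p ∈ S, 2 * LL := Finset.sum_le_sum hterm
      _ = (S.card : ℝ) * (2 * LL) := by rw [Finset.sum_const, nsmul_eq_mul]
      _ ≤ y * (2 * LL) := by nlinarith
      _ = 2 * (L / LL) := by rw [hydef]; field_simp
    -- bound on T
    have hTsum : Real.log y * (∑ p ∈ T, (n.factorization p : ℝ)) ≤ L := by
      rw [Finset.mul_sum]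
      calc ∑ p ∈ T, Real.log y * (n.factorization p : ℝ)
          ≤ ∑ p ∈ T, (n.factorization p : ℝ) * Real.log p := by
            apply Finset.sum_le_sum
            intro p hp
            rw [hT, Finset.mem_filter] at hp
            have hyp : y < p := lt_of_not_ge hp.2
            have hle : Real.log y ≤ Real.log p := Real.log_le_log hy0 hyp.le
            have ha : (0:ℝ) ≤ (n.factorization p : ℝ) := Nat.cast_nonneg _
            calc Real.log y * (n.factorization p : ℝ)
                ≤ Real.log p * (n.factorization p : ℝ) :=
                  mul_le_mul_of_nonneg_right hle ha
            _ = (n.factorization p : ℝ) * Real.log p := mul_comm _ _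
      _ ≤ ∑ p ∈ n.primeFactors, (n.factorization p : ℝ) * Real.log p := by
            apply Finset.sum_le_sum_of_subset_of_nonneg (Finset.filter_subset _ _)
            intro p hp _
            have hp2 := (Nat.prime_of_mem_primeFactors hp).two_le
            have : (0:ℝ) ≤ Real.log p := Real.log_nonneg (by exact_mod_cast by omega)
            positivity
      _ = L := hLsum.symm
    have hTa : ∑ p ∈ T, (n.factorization p : ℝ) ≤ 2 * (L / LL) := by
      have hsum0 : 0 ≤ ∑ p ∈ T, (n.factorization p : ℝ) :=
        Finset.sum_nonneg fun p _ => Nat.cast_nonneg _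
      have h1 : LL / 2 * (∑ p ∈ T, (n.factorization p : ℝ)) ≤ L :=
        (mul_le_mul_of_nonneg_right hlogy hsum0).trans hTsum
      rw [show 2 * (L / LL) = 2 * L / LL by ring, le_div_iff₀ hLL0]
      nlinarith [h1]
    have hTbound : ∑ p ∈ T, Real.log ((n.factorization p : ℝ) + 1)
        ≤ 2 * (L / LL) := by
      calc ∑ p ∈ T, Real.log ((n.factorization p : ℝ) + 1)
          ≤ ∑ p ∈ T, (n.factorization p : ℝ) * Real.log 2 := by
            apply Finset.sum_le_sum
            intro p _
            exact log_succ_le_mul_log2 (n.factorization p)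
      _ = (∑ p ∈ T, (n.factorization p : ℝ)) * Real.log 2 := by
            rw [Finset.sum_mul]
      _ ≤ 2 * (L / LL) := by
            have hL' : 0 ≤ 2 * (L / LL) := by positivity
            nlinarith
    rw [hlogsum, hsplit]
    linarith
  -- conclude
  rw [hrw, ← Real.log_le_iff_le_exp hτpos]
  calc Real.log (n.divisors.card) ≤ 4 * (L / LL) := hlogτ
  _ ≤ 32 / LL * L := by
      have h : 0 ≤ L / LL := div_nonneg hL0.le hLL0.le
      rw [show (32:ℝ) / LL * L = 32 * (L / LL) by ring]
      linarith
end

section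
/- There exists a constant A > 0 such that for all N ≥ 3 and all positive integers r, the number of n ≤ N with rad(n) = r is at most N^(A/log log N). -/
open Finset

lemma rad_primeFactors' {n : ℕ} : (rad n).primeFactors = n.primeFactors :=
  Nat.primeFactors_prod fun _ hp => Nat.prime_of_mem_primeFactors hp

lemma rad_dvd (n : ℕ) : rad n ∣ n := Nat.prod_primeFactors_dvd n


lemma geom_aux_s17 {x : ℝ} (h0 : 0 ≤ x) (h1 : x < 1) (n : ℕ) :
    ∑ i ∈ Finset.range n, x ^ i ≤ (1 - x)⁻¹ := by
  have hx : x ≠ 1 := ne_of_lt h1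
  have h1x : 0 < 1 - x := by linarith
  have hxn : 0 ≤ x ^ n := pow_nonneg h0 n
  rw [geom_sum_eq hx, show x ^ n - 1 = -(1 - x ^ n) by ring,
    show x - 1 = -(1 - x) by ring, neg_div_neg_eq, div_le_iff₀ h1x,
    inv_mul_cancel₀ h1x.ne']
  linarith

lemma key_sum_le (N : ℕ) (ε : ℝ) (hε : 0 < ε) (Q : Finset ℕ) (hQ : ∀ p ∈ Q, p.Prime) :
    ∑ m ∈ (Finset.Icc 1 N).filter (fun m => m.primeFactors ⊆ Q), ((m : ℝ) ^ ε)⁻¹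
      ≤ ∏ p ∈ Q, (1 - ((p : ℝ) ^ ε)⁻¹)⁻¹ := by
  induction Q using Finset.induction_on with
  | empty =>
    refine le_trans (Finset.sum_le_sum_of_subset_of_nonneg
      (t := {1}) ?_ fun i _ _ => by positivity) ?_
    · intro m hm
      simp only [Finset.mem_filter, Finset.mem_Icc] at hm
      have h1 : m.primeFactors = ∅ := Finset.subset_empty.1 hm.2
      have : m = 0 ∨ m = 1 := Nat.primeFactors_eq_empty.1 h1
      have hm1 : m = 1 := by omega
      simp [hm1]
    · simp
  | @insert p Q' hp ih =>
    have hP : p.Prime := hQ p (Finset.mem_insert_self p Q')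
    have hQ' : ∀ q ∈ Q', q.Prime := fun q hq => hQ q (Finset.mem_insert_of_mem hq)
    set x : ℝ := ((p : ℝ) ^ ε)⁻¹ with hxdef
    have hp2 : (2 : ℝ) ≤ (p : ℝ) := by exact_mod_cast hP.two_le
    have hpε : (1 : ℝ) < (p : ℝ) ^ ε :=
      (Real.one_lt_rpow_iff_of_pos (by linarith)).2 (Or.inl ⟨by linarith, hε⟩)
    have hx0 : 0 ≤ x := by positivity
    have hx1 : x < 1 := by
      rw [hxdef, inv_lt_one_iff₀]; right; exact hpε
    set S' := (Finset.Icc 1 N).filter (fun m => m.primeFactors ⊆ Q') with hS'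
    set T := (Finset.range (N + 1)) ×ˢ S' with hT
    set g : ℕ × ℕ → ℝ := fun q => x ^ q.1 * ((q.2 : ℝ) ^ ε)⁻¹ with hg
    set ψ : ℕ → ℕ × ℕ := fun m => (m.factorization p, ordCompl[p] m) with hψ
    have hrec : ∀ m ∈ (Finset.Icc 1 N).filter
        (fun m => m.primeFactors ⊆ insert p Q'), ((m : ℝ) ^ ε)⁻¹ = g (ψ m) := by
      intro m hm
      simp only [Finset.mem_filter, Finset.mem_Icc] at hm
      have hm0 : m ≠ 0 := by omega
      have hmm : p ^ m.factorization p * ordCompl[p] m = m :=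
        Nat.ordProj_mul_ordCompl_eq_self m p
      simp only [hg, hψ]
      have h1 : ((m : ℝ)) = (p : ℝ) ^ m.factorization p * ((ordCompl[p] m : ℕ) : ℝ) := by
        exact_mod_cast congrArg (Nat.cast : ℕ → ℝ) hmm.symm
      rw [h1, Real.mul_rpow (by positivity) (by positivity), mul_inv]
      congr 1
      rw [hxdef, ← Real.rpow_natCast (p : ℝ) (m.factorization p),
        ← Real.rpow_mul (by positivity), mul_comm,
        Real.rpow_mul (by positivity), Real.rpow_natCast, inv_pow]
    have hinj : Set.InjOn ψ ((Finset.Icc 1 N).filter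
        (fun m => m.primeFactors ⊆ insert p Q')) := by
      intro a ha b hb hab
      have ha' : p ^ a.factorization p * ordCompl[p] a = a :=
        Nat.ordProj_mul_ordCompl_eq_self a p
      have hb' : p ^ b.factorization p * ordCompl[p] b = b :=
        Nat.ordProj_mul_ordCompl_eq_self b p
      rw [hψ] at hab
      simp only [Prod.mk.injEq] at hab
      rw [← ha', ← hb', hab.2, hab.1]
    have himg : ((Finset.Icc 1 N).filter
        (fun m => m.primeFactors ⊆ insert p Q')).image ψ ⊆ T := by
      intro z hz
      rw [Finset.mem_image] at hz
      obtain ⟨m, hm, rfl⟩ := hz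
      simp only [Finset.mem_filter, Finset.mem_Icc] at hm
      have hm0 : m ≠ 0 := by omega
      rw [hT, hψ, Finset.mem_product]
      constructor
      · simp only [Finset.mem_range]
        have := Nat.factorization_lt p hm0
        omega
      · rw [hS', Finset.mem_filter, Finset.mem_Icc]
        refine ⟨⟨Nat.ordCompl_pos p hm0, le_trans (Nat.ordCompl_le m p) hm.1.2⟩, ?_⟩
        intro q hq
        have hqm : q ∈ m.primeFactors :=
          Nat.primeFactors_mono (Nat.ordCompl_dvd m p) hm0 hq
        have hqp : q ≠ p := by
          rintro rfl
          exact Nat.not_dvd_ordCompl hP hm0 (Nat.dvd_of_mem_primeFactors hq)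
        have := hm.2 hqm
        rw [Finset.mem_insert] at this
        tauto
    calc ∑ m ∈ (Finset.Icc 1 N).filter (fun m => m.primeFactors ⊆ insert p Q'),
          ((m : ℝ) ^ ε)⁻¹
        = ∑ m ∈ (Finset.Icc 1 N).filter (fun m => m.primeFactors ⊆ insert p Q'),
          g (ψ m) := Finset.sum_congr rfl hrec
      _ = ∑ z ∈ ((Finset.Icc 1 N).filter
            (fun m => m.primeFactors ⊆ insert p Q')).image ψ, g z :=
          (Finset.sum_image (fun a ha b hb h => hinj ha hb h)).symm
      _ ≤ ∑ z ∈ T, g z := Finset.sum_le_sum_of_subset_of_nonneg himg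
          (fun z _ _ => by rw [hg]; positivity)
      _ = (∑ a ∈ Finset.range (N + 1), x ^ a) * (∑ m ∈ S', ((m : ℝ) ^ ε)⁻¹) := by
          rw [hT, Finset.sum_product]
          simp only [hg]
          rw [← Finset.sum_mul_sum]
      _ ≤ (1 - x)⁻¹ * ∏ q ∈ Q', (1 - ((q : ℝ) ^ ε)⁻¹)⁻¹ := by
          refine mul_le_mul (geom_aux_s17 hx0 hx1 _) (ih hQ')
            (Finset.sum_nonneg fun i _ => by positivity)
            (inv_nonneg.2 (by linarith))
      _ = ∏ q ∈ insert p Q', (1 - ((q : ℝ) ^ ε)⁻¹)⁻¹ := by rw [Finset.prod_insert hp]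



lemma numeric_aux {y : ℝ} (hy : 2000 ≤ y) :
    (2:ℝ) ^ y * Real.log (2 * y) * y ≤ Real.exp y := by
  have hy0 : (0:ℝ) < y := by linarith
  have h2y : (2:ℝ) ^ y = Real.exp (Real.log 2 * y) := by
    rw [Real.rpow_def_of_pos (by norm_num : (0:ℝ) < 2)]
  have hlog2 : Real.log 2 ≤ 0.6932 := by
    have := Real.log_two_lt_d9; linarith
  have hstep : (2:ℝ) ^ y ≤ Real.exp (0.6932 * y) := by
    rw [h2y]; exact Real.exp_le_exp.2 (by nlinarith)
  have hlog2y : Real.log (2 * y) ≤ 2 * y := by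
    have := Real.log_le_sub_one_of_pos (by linarith : (0:ℝ) < 2 * y); linarith
  have hlogpos : 0 < Real.log (2 * y) := Real.log_pos (by linarith)
  have hcube : Real.exp (0.3 * y) = (Real.exp (0.1 * y)) ^ 3 := by
    rw [← Real.exp_nat_mul]; norm_num; ring_nf
  have he1 : (0.1 * y) ≤ Real.exp (0.1 * y) := by
    have := Real.add_one_le_exp (0.1 * y); linarith
  have hkey : 2 * y * y ≤ Real.exp (0.3068 * y) := by
    have h3 : (0.1 * y) ^ 3 ≤ (Real.exp (0.1 * y)) ^ 3 :=
      pow_le_pow_left₀ (by linarith) he1 3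
    have h4 : 2 * y * y ≤ (0.1 * y) ^ 3 := by
      nlinarith [mul_nonneg (mul_nonneg hy0.le hy0.le)
        (by linarith : (0:ℝ) ≤ 0.001 * y - 2)]
    have h5 : Real.exp (0.3 * y) ≤ Real.exp (0.3068 * y) :=
      Real.exp_le_exp.2 (by nlinarith)
    rw [hcube] at h5
    linarith
  calc (2:ℝ) ^ y * Real.log (2 * y) * y
      ≤ Real.exp (0.6932 * y) * (2 * y) * y := by
        have h2ynn : (0:ℝ) ≤ (2:ℝ) ^ y := by positivity
        exact mul_le_mul_of_nonneg_right
          (mul_le_mul hstep hlog2y hlogpos.le (Real.exp_pos _).le) hy0.le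
    _ = Real.exp (0.6932 * y) * (2 * y * y) := by ring
    _ ≤ Real.exp (0.6932 * y) * Real.exp (0.3068 * y) := by
        have := Real.exp_pos (0.6932 * y); nlinarith
    _ = Real.exp y := by rw [← Real.exp_add]; ring_nf

theorem card_rad_eq_loglog :
    ∃ A : ℝ, 0 < A ∧ ∀ N : ℕ, 3 ≤ N → ∀ r : ℕ, 0 < r →
      (((Finset.Icc 1 N).filter (fun n => rad n = r)).card : ℝ)
        ≤ (N : ℝ) ^ (A / Real.log (Real.log N)) := by
  refine ⟨4000, by norm_num, ?_⟩
  intro N hN3 r hr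
  set L := Real.log N with hLdef
  set y := Real.log L with hydef
  have hN1 : (1:ℝ) ≤ (N:ℝ) := by exact_mod_cast Nat.one_le_iff_ne_zero.2 (by omega)
  have hN0 : (0:ℝ) < (N:ℝ) := by linarith
  have hL1 : 1 < L := by
    rw [hLdef]
    calc (1:ℝ) < Real.log 3 := by
          rw [show (1:ℝ) = Real.log (Real.exp 1) by rw [Real.log_exp]]
          exact Real.log_lt_log (Real.exp_pos 1)
            (by linarith [Real.exp_one_lt_d9])
      _ ≤ Real.log N := Real.log_le_log (by norm_num) (by exact_mod_cast hN3)
  have hL0 : 0 < L := by linarith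
  have hy0 : 0 < y := Real.log_pos hL1
  by_cases hcase : y < 2000
  · -- small N
    have hcard : ((((Finset.Icc 1 N).filter (fun n => rad n = r)).card : ℕ) : ℝ) ≤ (N:ℝ) := by
      have h1 : ((Finset.Icc 1 N).filter (fun n => rad n = r)).card ≤ (Finset.Icc 1 N).card :=
        Finset.card_filter_le _ _
      have h2 : (Finset.Icc 1 N).card = N := by rw [Nat.card_Icc]; omega
      exact_mod_cast h1.trans_eq h2
    calc ((((Finset.Icc 1 N).filter (fun n => rad n = r)).card : ℕ) : ℝ)
        ≤ (N:ℝ) := hcard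
      _ = (N:ℝ) ^ (1:ℝ) := (Real.rpow_one _).symm
      _ ≤ (N:ℝ) ^ (4000 / y) := by
          refine Real.rpow_le_rpow_of_exponent_le hN1 ?_
          rw [le_div_iff₀ hy0]; linarith
  · -- large N
    push_neg at hcase
    set ε : ℝ := 1 / y with hεdef
    have hε : 0 < ε := by positivity
    set S := (Finset.Icc 1 N).filter (fun n => rad n = r) with hSdef
    rcases S.eq_empty_or_nonempty with hSe | hSne
    · rw [hSe]; simp only [Finset.card_empty, Nat.cast_zero]
      positivity
    · obtain ⟨n₀, hn₀⟩ := hSne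
      have hn₀' : (1 ≤ n₀ ∧ n₀ ≤ N) ∧ rad n₀ = r := by
        simpa [hSdef, Finset.mem_filter, Finset.mem_Icc] using hn₀
      set Q := r.primeFactors with hQdef
      have hQprime : ∀ p ∈ Q, p.Prime := fun p hp => Nat.prime_of_mem_primeFactors hp
      have hPFn : ∀ n ∈ S, n.primeFactors = Q := by
        intro n hn
        simp only [hSdef, Finset.mem_filter, Finset.mem_Icc] at hn
        rw [hQdef, ← hn.2, rad_primeFactors']
      have hrprod : r = ∏ p ∈ Q, p := by
        have h1 : Q = n₀.primeFactors := (hPFn n₀ hn₀).symm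
        rw [h1, ← hn₀'.2]; rfl
      have hrdvd : ∀ n ∈ S, r ∣ n := by
        intro n hn
        simp only [hSdef, Finset.mem_filter, Finset.mem_Icc] at hn
        rw [← hn.2]; exact rad_dvd n
      have hpt : ∀ p ∈ Q, 1 < (p:ℝ) ^ ε := by
        intro p hp
        have : (2:ℝ) ≤ (p:ℝ) := by exact_mod_cast (hQprime p hp).two_le
        exact (Real.one_lt_rpow_iff_of_pos (by linarith)).2 (Or.inl ⟨by linarith, hε⟩)
      -- Step A : card ≤ N^ε * ∑ f
      have stepA : ((S.card : ℕ) : ℝ) ≤ (N:ℝ) ^ ε * ∑ n ∈ S, ((n:ℝ) ^ ε)⁻¹ := by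
        rw [Finset.card_eq_sum_ones, Nat.cast_sum, Finset.mul_sum]
        refine Finset.sum_le_sum fun n hn => ?_
        simp only [hSdef, Finset.mem_filter, Finset.mem_Icc] at hn
        have hn1 : (1:ℝ) ≤ (n:ℝ) := by exact_mod_cast hn.1.1
        have hnN : (n:ℝ) ≤ (N:ℝ) := by exact_mod_cast hn.1.2
        have h1 : (n:ℝ) ^ ε ≤ (N:ℝ) ^ ε :=
          Real.rpow_le_rpow (by linarith) hnN hε.le
        have h2 : (0:ℝ) < (n:ℝ) ^ ε := Real.rpow_pos_of_pos (by linarith) ε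
        rw [Nat.cast_one, show ((N:ℝ) ^ ε * ((n:ℝ) ^ ε)⁻¹) = (N:ℝ)^ε / (n:ℝ)^ε by ring,
          le_div_iff₀ h2, one_mul]
        exact h1
      -- Step B : ∑ f ≤ (r^ε)⁻¹ * ∏ (1 - p^-ε)⁻¹
      have stepB : ∑ n ∈ S, ((n:ℝ) ^ ε)⁻¹
          ≤ (((r:ℝ)) ^ ε)⁻¹ * ∏ p ∈ Q, (1 - ((p:ℝ) ^ ε)⁻¹)⁻¹ := by
        have hterm : ∀ n ∈ S, ((n:ℝ) ^ ε)⁻¹ = (((r:ℝ)) ^ ε)⁻¹ * (((n / r : ℕ) : ℝ) ^ ε)⁻¹ := by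
          intro n hn
          have hd : r ∣ n := hrdvd n hn
          have h1 : ((n:ℝ)) = (r:ℝ) * ((n / r : ℕ) : ℝ) := by
            exact_mod_cast (Nat.mul_div_cancel' hd).symm
          rw [h1, Real.mul_rpow (by positivity) (by positivity), mul_inv]
        have hinj : Set.InjOn (fun n => n / r) S := by
          intro a ha b hb hab
          have h1 := Nat.mul_div_cancel' (hrdvd a ha)
          have h2 := Nat.mul_div_cancel' (hrdvd b hb)
          simp only at hab
          rw [← h1, ← h2, hab]
        have himg : S.image (fun n => n / r) ⊆
            (Finset.Icc 1 N).filter (fun m => m.primeFactors ⊆ Q) := by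
          intro m hm
          rw [Finset.mem_image] at hm
          obtain ⟨n, hn, rfl⟩ := hm
          have hd := hrdvd n hn
          have hmem := hn
          simp only [hSdef, Finset.mem_filter, Finset.mem_Icc] at hmem
          have hn0 : 0 < n := hmem.1.1
          rw [Finset.mem_filter, Finset.mem_Icc]
          refine ⟨⟨Nat.div_pos (Nat.le_of_dvd hn0 hd) hr, le_trans (Nat.div_le_self n r) hmem.1.2⟩, ?_⟩
          have hdvd2 : n / r ∣ n := Nat.div_dvd_of_dvd hd
          calc (n / r).primeFactors ⊆ n.primeFactors :=
                Nat.primeFactors_mono hdvd2 (by omega)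
            _ = Q := hPFn n hn
        calc ∑ n ∈ S, ((n:ℝ) ^ ε)⁻¹
            = ∑ n ∈ S, (((r:ℝ)) ^ ε)⁻¹ * (((n / r : ℕ) : ℝ) ^ ε)⁻¹ :=
              Finset.sum_congr rfl hterm
          _ = (((r:ℝ)) ^ ε)⁻¹ * ∑ n ∈ S, (((n / r : ℕ) : ℝ) ^ ε)⁻¹ := by
              rw [Finset.mul_sum]
          _ = (((r:ℝ)) ^ ε)⁻¹ * ∑ m ∈ S.image (fun n => n / r), ((m:ℝ) ^ ε)⁻¹ := by
              rw [Finset.sum_image (fun a ha b hb h => hinj ha hb h)]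
          _ ≤ (((r:ℝ)) ^ ε)⁻¹ * ∑ m ∈ (Finset.Icc 1 N).filter (fun m => m.primeFactors ⊆ Q),
                ((m:ℝ) ^ ε)⁻¹ := by
              refine mul_le_mul_of_nonneg_left
                (Finset.sum_le_sum_of_subset_of_nonneg himg fun i _ _ => by positivity)
                (by positivity)
          _ ≤ (((r:ℝ)) ^ ε)⁻¹ * ∏ p ∈ Q, (1 - ((p:ℝ) ^ ε)⁻¹)⁻¹ :=
              mul_le_mul_of_nonneg_left (key_sum_le N ε hε Q hQprime) (by positivity)
      -- Step C : identify with ∏ (p^ε - 1)⁻¹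
      have stepC : (((r:ℝ)) ^ ε)⁻¹ * ∏ p ∈ Q, (1 - ((p:ℝ) ^ ε)⁻¹)⁻¹
          = ∏ p ∈ Q, (((p:ℝ) ^ ε) - 1)⁻¹ := by
        have hcast : ((r:ℝ)) ^ ε = ∏ p ∈ Q, ((p:ℝ)) ^ ε := by
          rw [hrprod, Nat.cast_prod, ← Real.finset_prod_rpow _ _ (fun i _ => by positivity) ε]
        rw [hcast, ← Finset.prod_inv_distrib, ← Finset.prod_mul_distrib]
        refine Finset.prod_congr rfl fun p hp => ?_
        have ht := hpt p hp
        have ht0 : ((p:ℝ)) ^ ε ≠ 0 := by positivity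
        rw [← mul_inv]
        congr 1
        rw [mul_sub, mul_one, mul_inv_cancel₀ ht0]
      -- Step D : product bound
      set P : ℝ := (2:ℝ) ^ y with hPdef
      have hP0 : (0:ℝ) < P := Real.rpow_pos_of_pos (by norm_num) y
      have h2y1 : (1:ℝ) ≤ 2 * y := by linarith
      have hterm_pos : ∀ p ∈ Q, (0:ℝ) < (((p:ℝ) ^ ε) - 1)⁻¹ :=
        fun p hp => inv_pos.2 (by linarith [hpt p hp])
      have hbig : ∏ p ∈ Q.filter (fun p : ℕ => ¬ ((p:ℝ) < P)), (((p:ℝ) ^ ε) - 1)⁻¹ ≤ 1 := by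
        refine Finset.prod_le_one
          (fun p hp => (hterm_pos p (Finset.mem_filter.1 hp).1).le) ?_
        intro p hp
        rw [Finset.mem_filter] at hp
        have hpP : P ≤ (p:ℝ) := not_lt.1 hp.2
        have hPε : P ^ ε = 2 := by
          rw [hPdef, ← Real.rpow_mul (by norm_num : (0:ℝ) ≤ 2), hεdef, mul_one_div,
            div_self hy0.ne', Real.rpow_one]
        have h2 : (2:ℝ) ≤ (p:ℝ) ^ ε := by
          rw [← hPε]; exact Real.rpow_le_rpow hP0.le hpP hε.le
        have h1 : (1:ℝ) ≤ (p:ℝ) ^ ε - 1 := by linarith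
        exact inv_le_one_of_one_le₀ h1
      have hsmall : ∏ p ∈ Q.filter (fun p : ℕ => ((p:ℝ) < P)), (((p:ℝ) ^ ε) - 1)⁻¹
          ≤ (2 * y) ^ (Q.filter (fun p : ℕ => ((p:ℝ) < P))).card := by
        rw [← Finset.prod_const]
        refine Finset.prod_le_prod
          (fun p hp => (hterm_pos p (Finset.mem_filter.1 hp).1).le) ?_
        intro p hp
        rw [Finset.mem_filter] at hp
        have hp2 : (2:ℝ) ≤ (p:ℝ) := by exact_mod_cast (hQprime p hp.1).two_le
        have h2e : (2:ℝ) ^ ε ≤ (p:ℝ) ^ ε := Real.rpow_le_rpow (by norm_num) hp2 hε.le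
        have hlb : 1 / (2 * y) ≤ (2:ℝ) ^ ε - 1 := by
          have hexp : (2:ℝ) ^ ε = Real.exp (Real.log 2 * ε) :=
            Real.rpow_def_of_pos (by norm_num) ε
          have h1 : Real.log 2 * ε + 1 ≤ Real.exp (Real.log 2 * ε) :=
            Real.add_one_le_exp _
          have hlog2 : (0.5:ℝ) ≤ Real.log 2 := by linarith [Real.log_two_gt_d9]
          have h5 : (0.5:ℝ) * ε ≤ Real.log 2 * ε := by nlinarith
          have h6 : 1 / (2 * y) = (0.5:ℝ) * ε := by
            rw [hεdef]; field_simp; ring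
          rw [hexp, h6]; linarith
        have hgt : (0:ℝ) < (2:ℝ) ^ ε - 1 := lt_of_lt_of_le (by positivity) hlb
        calc (((p:ℝ) ^ ε) - 1)⁻¹ ≤ ((2:ℝ) ^ ε - 1)⁻¹ := by
              apply inv_anti₀ hgt (by linarith)
          _ ≤ 2 * y := by
              rw [show (2 * y : ℝ) = (1 / (2 * y))⁻¹ by rw [one_div, inv_inv]]
              exact inv_anti₀ (by positivity) hlb
      have hcardP : (((Q.filter (fun p : ℕ => ((p:ℝ) < P))).card : ℕ) : ℝ) ≤ P := by
        have hsub : Q.filter (fun p : ℕ => ((p:ℝ) < P)) ⊆ Finset.Icc 2 ⌊P⌋₊ := by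
          intro p hp
          rw [Finset.mem_filter] at hp
          rw [Finset.mem_Icc]
          exact ⟨(hQprime p hp.1).two_le, Nat.le_floor hp.2.le⟩
        have h1 : (Q.filter (fun p : ℕ => ((p:ℝ) < P))).card ≤ (Finset.Icc 2 ⌊P⌋₊).card :=
          Finset.card_le_card hsub
        rw [Nat.card_Icc] at h1
        have h2 : (Q.filter (fun p : ℕ => ((p:ℝ) < P))).card ≤ ⌊P⌋₊ := by omega
        calc (((Q.filter (fun p : ℕ => ((p:ℝ) < P))).card : ℕ) : ℝ)
            ≤ ((⌊P⌋₊ : ℕ) : ℝ) := by exact_mod_cast h2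
          _ ≤ P := Nat.floor_le hP0.le
      have stepD : ∏ p ∈ Q, (((p:ℝ) ^ ε) - 1)⁻¹ ≤ (2 * y) ^ P := by
        rw [← Finset.prod_filter_mul_prod_filter_not Q (fun p : ℕ => ((p:ℝ) < P))]
        have hpow : ((2 * y) ^ (Q.filter (fun p : ℕ => ((p:ℝ) < P))).card : ℝ) ≤ (2 * y) ^ P := by
          rw [← Real.rpow_natCast (2 * y)]
          exact Real.rpow_le_rpow_of_exponent_le h2y1 hcardP
        calc (∏ p ∈ Q.filter (fun p : ℕ => ((p:ℝ) < P)), (((p:ℝ) ^ ε) - 1)⁻¹) *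
              ∏ p ∈ Q.filter (fun p : ℕ => ¬ ((p:ℝ) < P)), (((p:ℝ) ^ ε) - 1)⁻¹
            ≤ ((2 * y) ^ (Q.filter (fun p : ℕ => ((p:ℝ) < P))).card : ℝ) * 1 := by
              refine mul_le_mul hsmall hbig
                (Finset.prod_nonneg fun p hp => (hterm_pos p (Finset.mem_filter.1 hp).1).le)
                (by positivity)
          _ = ((2 * y) ^ (Q.filter (fun p : ℕ => ((p:ℝ) < P))).card : ℝ) := mul_one _
          _ ≤ (2 * y) ^ P := hpow
      -- Step E : numeric conclusion
      have stepE : (N:ℝ) ^ ε * (2 * y) ^ P ≤ (N:ℝ) ^ (4000 / y) := by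
        have hNε : (N:ℝ) ^ ε = Real.exp (L * ε) := by
          rw [Real.rpow_def_of_pos hN0]
        have hrhs : (N:ℝ) ^ (4000 / y) = Real.exp (L * (4000 / y)) := by
          rw [Real.rpow_def_of_pos hN0]
        have h2yP : (2 * y) ^ P = Real.exp (Real.log (2 * y) * P) :=
          Real.rpow_def_of_pos (by linarith) P
        rw [hNε, hrhs, h2yP, ← Real.exp_add, Real.exp_le_exp]
        have hLexp : L = Real.exp y := (Real.exp_log hL0).symm
        have hnum := numeric_aux hcase
        have h1 : Real.log (2 * y) * P * y ≤ L := by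
          rw [hLexp, hPdef,
            show Real.log (2 * y) * (2:ℝ) ^ y * y = (2:ℝ) ^ y * Real.log (2 * y) * y by ring]
          exact hnum
        have h2 : Real.log (2 * y) * P ≤ L / y := by
          rw [le_div_iff₀ hy0]; exact h1
        have h3 : L * ε = L / y := by rw [hεdef]; ring
        have hLy : 0 < L / y := by positivity
        rw [h3, show L * (4000 / y) = 4000 * (L / y) by ring]
        linarith
      calc ((S.card : ℕ) : ℝ)
          ≤ (N:ℝ) ^ ε * ∑ n ∈ S, ((n:ℝ) ^ ε)⁻¹ := stepA
        _ ≤ (N:ℝ) ^ ε * ((((r:ℝ)) ^ ε)⁻¹ * ∏ p ∈ Q, (1 - ((p:ℝ) ^ ε)⁻¹)⁻¹) :=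
            mul_le_mul_of_nonneg_left stepB (by positivity)
        _ = (N:ℝ) ^ ε * ∏ p ∈ Q, (((p:ℝ) ^ ε) - 1)⁻¹ := by rw [stepC]
        _ ≤ (N:ℝ) ^ ε * ((2 * y) ^ P) := mul_le_mul_of_nonneg_left stepD (by positivity)
        _ ≤ (N:ℝ) ^ (4000 / y) := stepE
end

section
/- For every ε > 0 there exists a constant C_ε > 0 such that for all N ≥ 1, the number of triples (a,b,c) of positive integers with a,b,c ≤ N, gcd(a,b) = 1, a + b = c, and rad(abc) < c^(1−ε) is at most C_ε · N^(2/3). -/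
open Finset

lemma primeFactors_rad (n : ℕ) : (rad n).primeFactors = n.primeFactors := by
  have := Nat.primeFactors_prod (s := n.primeFactors)
    (fun p hp => Nat.prime_of_mem_primeFactors hp)
  simpa [rad] using this

lemma choose_le_two_pow (n k : ℕ) : n.choose k ≤ 2 ^ n := by
  by_cases h : k ≤ n
  · calc n.choose k ≤ ∑ i ∈ Finset.range (n+1), n.choose i :=
          Finset.single_le_sum (fun i _ => Nat.zero_le _)
            (Finset.mem_range.mpr (Nat.lt_succ_of_le h))
    _ = 2 ^ n := Nat.sum_range_choose n
  · rw [Nat.choose_eq_zero_of_lt (Nat.lt_of_not_le h)]; exact Nat.zero_le _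

lemma fiber_card_le (z N r : ℕ) (hz : 2 ≤ z) (hN : 1 ≤ N) :
    ((Finset.Icc 1 N).filter (fun n => rad n = r)).card ≤
      (Nat.log 2 N + z) ^ z * 2 ^ (2 * Nat.log z N) := by
  classical
  set K := Nat.log 2 N with hK
  set Kz := Nat.log z N with hKzdef
  set F := (Finset.Icc 1 N).filter (fun n => rad n = r) with hF
  rcases F.eq_empty_or_nonempty with hFe | ⟨n₀, hn₀⟩
  · simp [hFe]
  have hNne : N ≠ 0 := by omega
  have hz1 : 1 < z := hz
  have hn₀' : (1 ≤ n₀ ∧ n₀ ≤ N) ∧ rad n₀ = r := by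
    have := hn₀
    simp only [hF, Finset.mem_filter, Finset.mem_Icc] at this
    exact this
  -- the finite set s of allowed "big" entries
  set s : Finset ℕ := insert 1 (r.primeFactors.filter (fun p => z ≤ p)) with hs
  have h1s : (1 : ℕ) ∈ s := Finset.mem_insert_self 1 _
  -- s.card ≤ Kz + 1
  have hscard : s.card ≤ Kz + 1 := by
    have hsub : (r.primeFactors.filter (fun p => z ≤ p)) ⊆ n₀.primeFactors := by
      intro p hp
      have hp' : p ∈ r.primeFactors := Finset.mem_of_mem_filter p hp
      rw [← hn₀'.2, primeFactors_rad] at hp'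
      exact hp'
    have hpow : z ^ (r.primeFactors.filter (fun p => z ≤ p)).card ≤
        ∏ p ∈ (r.primeFactors.filter (fun p => z ≤ p)), p := by
      refine Finset.pow_card_le_prod _ _ _ ?_
      intro x hx
      exact (Finset.mem_filter.mp hx).2
    have hdvd : (∏ p ∈ (r.primeFactors.filter (fun p => z ≤ p)), p) ∣ n₀ := by
      refine dvd_trans ?_ (rad_dvd n₀)
      have : (∏ p ∈ (r.primeFactors.filter (fun p => z ≤ p)), p) ∣
          ∏ p ∈ n₀.primeFactors, p :=
        Finset.prod_dvd_prod_of_subset _ _ _ hsub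
      simpa [rad] using this
    have hle : z ^ (r.primeFactors.filter (fun p => z ≤ p)).card ≤ N :=
      le_trans (le_trans hpow (Nat.le_of_dvd (by omega) hdvd)) hn₀'.1.2
    have : (r.primeFactors.filter (fun p => z ≤ p)).card ≤ Kz :=
      (Nat.le_log_iff_pow_le hz1 hNne).mpr hle
    calc s.card ≤ (r.primeFactors.filter (fun p => z ≤ p)).card + 1 :=
          Finset.card_insert_le _ _
    _ ≤ Kz + 1 := by omega
  -- facts about members of F
  have hmemF : ∀ n ∈ F, 1 ≤ n ∧ n ≤ N ∧ rad n = r := by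
    intro n hn
    simp only [hF, Finset.mem_filter, Finset.mem_Icc] at hn
    exact ⟨hn.1.1, hn.1.2, hn.2⟩
  classical
  set L : ℕ → Multiset ℕ := fun n => (n.primeFactorsList : Multiset ℕ) with hL
  set msmall : ℕ → Multiset ℕ := fun n => (L n).filter (fun p => ¬ z ≤ p) with hmsmall
  set mbig : ℕ → Multiset ℕ := fun n => (L n).filter (fun p => z ≤ p) with hmbig
  set pad : ℕ → Multiset ℕ → Multiset ℕ :=
    fun k m => m + Multiset.replicate (k - Multiset.card m) 1 with hpad
  have hzpos : 0 < z := by omega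
  set toFin : ℕ → Fin z := fun x => ⟨x % z, Nat.mod_lt _ hzpos⟩ with htoFin
  set toS : ℕ → {x // x ∈ s} := fun x => if h : x ∈ s then ⟨x, h⟩ else ⟨1, h1s⟩ with htoS
  set fixK : Multiset ℕ → Sym ℕ K := fun m =>
    if h : Multiset.card m = K then ⟨m, h⟩
    else ⟨Multiset.replicate K 1, Multiset.card_replicate _ _⟩ with hfixK
  set fixKz : Multiset ℕ → Sym ℕ Kz := fun m =>
    if h : Multiset.card m = Kz then ⟨m, h⟩
    else ⟨Multiset.replicate Kz 1, Multiset.card_replicate _ _⟩ with hfixKz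
  set enc : ℕ → Sym (Fin z) K × Sym {x // x ∈ s} Kz := fun n =>
    (Sym.map toFin (fixK (pad K (msmall n))), Sym.map toS (fixKz (pad Kz (mbig n)))) with henc
  -- cardinality facts for n in F
  have hLprod : ∀ n ∈ F, (L n).prod = n := by
    intro n hn
    have h1 := (hmemF n hn).1
    simp only [hL, Multiset.prod_coe]
    exact Nat.prod_primeFactorsList (by omega)
  have hLcard : ∀ n ∈ F, Multiset.card (L n) ≤ K := by
    intro n hn
    obtain ⟨h1, h2, _⟩ := hmemF n hn
    have hpow : 2 ^ Multiset.card (L n) ≤ (L n).prod := by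
      refine Multiset.pow_card_le_prod ?_
      intro x hx
      have : x.Prime := Nat.prime_of_mem_primeFactorsList (by
        simpa [hL, Multiset.mem_coe] using hx)
      exact this.two_le
    rw [hLprod n hn] at hpow
    exact (Nat.le_log_iff_pow_le (by norm_num) hNne).mpr (le_trans hpow h2)
  have hsmallcard : ∀ n ∈ F, Multiset.card (msmall n) ≤ K := fun n hn =>
    le_trans (Multiset.card_le_card (Multiset.filter_le _ _)) (hLcard n hn)
  have hbigcard : ∀ n ∈ F, Multiset.card (mbig n) ≤ Kz := by
    intro n hn
    obtain ⟨h1, h2, _⟩ := hmemF n hn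
    have hpow : z ^ Multiset.card (mbig n) ≤ (mbig n).prod := by
      refine Multiset.pow_card_le_prod ?_
      intro x hx
      exact (Multiset.mem_filter.mp hx).2
    have hdvd : (mbig n).prod ∣ (L n).prod :=
      Multiset.prod_dvd_prod_of_le (Multiset.filter_le _ _)
    rw [hLprod n hn] at hdvd
    have : z ^ Multiset.card (mbig n) ≤ N :=
      le_trans hpow (le_trans (Nat.le_of_dvd (by omega) hdvd) h2)
    exact (Nat.le_log_iff_pow_le hz1 hNne).mpr this
  have hpadcard : ∀ (k : ℕ) (m : Multiset ℕ), Multiset.card m ≤ k →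
      Multiset.card (pad k m) = k := by
    intro k m hm
    simp only [hpad, Multiset.card_add, Multiset.card_replicate]
    omega
  -- elements of pads
  have hpadsmall_lt : ∀ n ∈ F, ∀ x ∈ pad K (msmall n), x < z := by
    intro n hn x hx
    rcases Multiset.mem_add.mp hx with hx | hx
    · have := (Multiset.mem_filter.mp hx).2
      omega
    · have := Multiset.eq_of_mem_replicate hx
      omega
  have hpadbig_mem : ∀ n ∈ F, ∀ x ∈ pad Kz (mbig n), x ∈ s := by
    intro n hn x hx
    rcases Multiset.mem_add.mp hx with hx | hx
    · have hxf := Multiset.mem_filter.mp hx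
      have hxL : x ∈ n.primeFactorsList := by
        simpa [hL, Multiset.mem_coe] using hxf.1
      have hxpf : x ∈ n.primeFactors := List.mem_toFinset.mpr hxL
      have hxr : x ∈ r.primeFactors := by
        rw [← (hmemF n hn).2.2, primeFactors_rad]
        exact hxpf
      exact Finset.mem_insert_of_mem (Finset.mem_filter.mpr ⟨hxr, hxf.2⟩)
    · rw [Multiset.eq_of_mem_replicate hx]
      exact h1s
  -- recovery of msmall and mbig from pads
  have hrecs : ∀ n ∈ F, (pad K (msmall n)).filter (fun x => 2 ≤ x) = msmall n := by
    intro n hn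
    simp only [hpad, Multiset.filter_add]
    have h1 : (msmall n).filter (fun x => 2 ≤ x) = msmall n := by
      rw [Multiset.filter_eq_self]
      intro x hx
      have : x.Prime := Nat.prime_of_mem_primeFactorsList (by
        have := (Multiset.mem_filter.mp hx).1
        simpa [hL, Multiset.mem_coe] using this)
      exact this.two_le
    have h2 : (Multiset.replicate (K - Multiset.card (msmall n)) 1).filter
        (fun x => 2 ≤ x) = 0 := by
      rw [Multiset.filter_eq_nil]
      intro x hx
      have := Multiset.eq_of_mem_replicate hx
      omega
    rw [h1, h2, add_zero]
  have hrecb : ∀ n ∈ F, (pad Kz (mbig n)).filter (fun x => z ≤ x) = mbig n := by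
    intro n hn
    simp only [hpad, Multiset.filter_add]
    have h1 : (mbig n).filter (fun x => z ≤ x) = mbig n := by
      rw [Multiset.filter_eq_self]
      intro x hx
      exact (Multiset.mem_filter.mp hx).2
    have h2 : (Multiset.replicate (Kz - Multiset.card (mbig n)) 1).filter
        (fun x => z ≤ x) = 0 := by
      rw [Multiset.filter_eq_nil]
      intro x hx
      have := Multiset.eq_of_mem_replicate hx
      omega
    rw [h1, h2, add_zero]
  -- the injection
  have hcard : F.card ≤ (Finset.univ : Finset (Sym (Fin z) K × Sym {x // x ∈ s} Kz)).card := by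
    refine Finset.card_le_card_of_injOn enc (fun n _ => Finset.mem_univ _) ?_
    intro n₁ h₁' n₂ h₂' heq
    have h₁ : n₁ ∈ F := h₁'
    have h₂ : n₂ ∈ F := h₂'
    have heq1 := congrArg Prod.fst heq
    have heq2 := congrArg Prod.snd heq
    simp only [henc] at heq1 heq2
    -- component 1 : recover pad K (msmall n)
    have hfix1 : ∀ n, ∀ hn : n ∈ F, fixK (pad K (msmall n)) = ⟨pad K (msmall n),
        hpadcard K (msmall n) (hsmallcard n hn)⟩ := by
      intro n hn
      simp only [hfixK]
      exact dif_pos (hpadcard K (msmall n) (hsmallcard n hn))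
    have hP : pad K (msmall n₁) = pad K (msmall n₂) := by
      have e1 : Multiset.map toFin (pad K (msmall n₁)) =
          Multiset.map toFin (pad K (msmall n₂)) := by
        have h1c : ((Sym.map toFin (fixK (pad K (msmall n₁))) : Sym (Fin z) K) :
            Multiset (Fin z)) = ((Sym.map toFin (fixK (pad K (msmall n₂)))) :
            Multiset (Fin z)) := by rw [heq1]
        rw [hfix1 n₁ h₁, hfix1 n₂ h₂] at h1c
        exact h1c
      have recover : ∀ n ∈ F, Multiset.map Fin.val
          (Multiset.map toFin (pad K (msmall n))) = pad K (msmall n) := by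
        intro n hn
        rw [Multiset.map_map]
        have : ∀ x ∈ pad K (msmall n), (Fin.val ∘ toFin) x = x := by
          intro x hx
          simp only [htoFin, Function.comp]
          exact Nat.mod_eq_of_lt (hpadsmall_lt n hn x hx)
        rw [Multiset.map_congr rfl this, Multiset.map_id']
      rw [← recover n₁ h₁, ← recover n₂ h₂, e1]
    -- component 2 : recover pad Kz (mbig n)
    have hfix2 : ∀ n, ∀ hn : n ∈ F, fixKz (pad Kz (mbig n)) = ⟨pad Kz (mbig n),
        hpadcard Kz (mbig n) (hbigcard n hn)⟩ := by
      intro n hn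
      simp only [hfixKz]
      exact dif_pos (hpadcard Kz (mbig n) (hbigcard n hn))
    have hQ : pad Kz (mbig n₁) = pad Kz (mbig n₂) := by
      have e2 : Multiset.map toS (pad Kz (mbig n₁)) =
          Multiset.map toS (pad Kz (mbig n₂)) := by
        have h2c : ((Sym.map toS (fixKz (pad Kz (mbig n₁))) : Sym {x // x ∈ s} Kz) :
            Multiset {x // x ∈ s}) = ((Sym.map toS (fixKz (pad Kz (mbig n₂)))) :
            Multiset {x // x ∈ s}) := by rw [heq2]
        rw [hfix2 n₁ h₁, hfix2 n₂ h₂] at h2c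
        exact h2c
      have recover : ∀ n ∈ F, Multiset.map Subtype.val
          (Multiset.map toS (pad Kz (mbig n))) = pad Kz (mbig n) := by
        intro n hn
        rw [Multiset.map_map]
        have : ∀ x ∈ pad Kz (mbig n), (Subtype.val ∘ toS) x = x := by
          intro x hx
          simp only [htoS, Function.comp]
          rw [dif_pos (hpadbig_mem n hn x hx)]
        rw [Multiset.map_congr rfl this, Multiset.map_id']
      rw [← recover n₁ h₁, ← recover n₂ h₂, e2]
    -- recover n
    have hms : msmall n₁ = msmall n₂ := by
      rw [← hrecs n₁ h₁, ← hrecs n₂ h₂, hP]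
    have hmb : mbig n₁ = mbig n₂ := by
      rw [← hrecb n₁ h₁, ← hrecb n₂ h₂, hQ]
    have hsplit : ∀ n, mbig n + msmall n = L n := by
      intro n
      simp only [hmbig, hmsmall]
      exact Multiset.filter_add_not _ _
    calc n₁ = (L n₁).prod := (hLprod n₁ h₁).symm
    _ = (mbig n₁ + msmall n₁).prod := by rw [hsplit]
    _ = (mbig n₂ + msmall n₂).prod := by rw [hms, hmb]
    _ = (L n₂).prod := by rw [hsplit]
    _ = n₂ := hLprod n₂ h₂
  -- compute / bound the cardinality of the target
  have htarget : (Finset.univ : Finset (Sym (Fin z) K × Sym {x // x ∈ s} Kz)).card =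
      (z + K - 1).choose K * (s.card + Kz - 1).choose Kz := by
    rw [Finset.card_univ, Fintype.card_prod, Sym.card_sym_eq_choose, Sym.card_sym_eq_choose,
      Fintype.card_fin, Fintype.card_coe]
  have hb1 : (z + K - 1).choose K ≤ (K + z) ^ z := by
    have e : z + K - 1 = K + (z - 1) := by omega
    rw [e]
    have hsymm : (K + (z - 1)).choose K = (K + (z - 1)).choose (z - 1) := by
      have h := Nat.choose_symm (n := K + (z - 1)) (k := z - 1) (by omega)
      have e2 : K + (z - 1) - (z - 1) = K := by omega
      rw [e2] at h
      exact h
    rw [hsymm]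
    calc (K + (z - 1)).choose (z - 1) ≤ (K + (z - 1)) ^ (z - 1) :=
        Nat.choose_le_pow _ _
    _ ≤ (K + z) ^ (z - 1) := Nat.pow_le_pow_left (by omega) _
    _ ≤ (K + z) ^ z := Nat.pow_le_pow_right (by omega) (by omega)
  have hb2 : (s.card + Kz - 1).choose Kz ≤ 2 ^ (2 * Kz) := by
    have hpos : 1 ≤ s.card := Finset.card_pos.mpr ⟨1, h1s⟩
    calc (s.card + Kz - 1).choose Kz ≤ (2 * Kz).choose Kz :=
        Nat.choose_le_choose _ (by omega)
    _ ≤ 2 ^ (2 * Kz) := choose_le_two_pow _ _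
  calc F.card ≤ _ := hcard
  _ = (z + K - 1).choose K * (s.card + Kz - 1).choose Kz := htarget
  _ ≤ (K + z) ^ z * 2 ^ (2 * Kz) := Nat.mul_le_mul hb1 hb2

lemma fiber_card_le_real (δ : ℝ) (hδ : 0 < δ) :
    ∃ C : ℝ, 0 < C ∧ ∀ N : ℕ, 1 ≤ N → ∀ r : ℕ,
      (((Finset.Icc 1 N).filter (fun n => rad n = r)).card : ℝ) ≤ C * (N : ℝ) ^ δ := by
  set s₀ : ℕ := max 1 ⌈4 / δ⌉₊ with hs₀def
  have hs₀pos : 0 < s₀ := lt_of_lt_of_le Nat.one_pos (le_max_left _ _)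
  have hs₀R : 4 / δ ≤ (s₀ : ℝ) := by
    refine le_trans (Nat.le_ceil _) ?_
    exact_mod_cast Nat.cast_le.mpr (le_max_right _ _)
  set z : ℕ := 2 ^ s₀ with hzdef
  have hz : 2 ≤ z := by
    calc 2 = 2 ^ 1 := (pow_one 2).symm
    _ ≤ 2 ^ s₀ := Nat.pow_le_pow_right (by norm_num) hs₀pos
  have hzR : (0:ℝ) < z := by positivity
  set η : ℝ := δ / (2 * z) with hηdef
  have hη : 0 < η := by positivity
  have hlog2 : (0:ℝ) < Real.log 2 := Real.log_pos (by norm_num)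
  set A : ℝ := 1 / (η * Real.log 2) + z with hAdef
  have hA : 0 < A := by positivity
  refine ⟨A ^ z, by positivity, ?_⟩
  intro N hN r
  have hNne : N ≠ 0 := by omega
  have hNR : (1:ℝ) ≤ N := by exact_mod_cast hN
  have hNpos : (0:ℝ) < N := by linarith
  set K := Nat.log 2 N with hK
  set Kz := Nat.log z N with hKz
  have hmain := fiber_card_le z N r hz hN
  have hcast : (((Finset.Icc 1 N).filter (fun n => rad n = r)).card : ℝ) ≤
      ((K + z : ℕ) : ℝ) ^ z * (2:ℝ) ^ (2 * Kz) := by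
    exact_mod_cast hmain
  -- bound the polylog factor
  have hKlog : (K : ℝ) * Real.log 2 ≤ Real.log N := by
    have h2K : ((2:ℝ)) ^ K ≤ (N:ℝ) := by exact_mod_cast Nat.pow_log_le_self 2 hNne
    calc (K : ℝ) * Real.log 2 = Real.log ((2:ℝ) ^ K) := by rw [Real.log_pow]
    _ ≤ Real.log N := Real.log_le_log (by positivity) h2K
  have hlogN : Real.log N ≤ (N:ℝ) ^ η / η := by
    have h1 : Real.log ((N:ℝ) ^ η) ≤ (N:ℝ) ^ η - 1 :=
      Real.log_le_sub_one_of_pos (Real.rpow_pos_of_pos hNpos η)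
    rw [Real.log_rpow hNpos] at h1
    have h2 : η * Real.log N ≤ (N:ℝ) ^ η := by linarith
    rw [le_div_iff₀ hη]
    nlinarith [h2]
  have hone_le : (1:ℝ) ≤ (N:ℝ) ^ η := Real.one_le_rpow hNR (le_of_lt hη)
  have hstep3 : ((K + z : ℕ) : ℝ) ≤ A * (N:ℝ) ^ η := by
    push_cast
    have hKb : (K : ℝ) ≤ Real.log N / Real.log 2 := by
      rw [le_div_iff₀ hlog2]; exact hKlog
    have : (K:ℝ) ≤ (N:ℝ) ^ η * (1 / (η * Real.log 2)) := by
      calc (K:ℝ) ≤ Real.log N / Real.log 2 := hKb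
      _ ≤ ((N:ℝ) ^ η / η) / Real.log 2 := by gcongr
      _ = (N:ℝ) ^ η * (1 / (η * Real.log 2)) := by ring
    calc (K:ℝ) + (z:ℝ) ≤ (N:ℝ) ^ η * (1 / (η * Real.log 2)) + (N:ℝ) ^ η * z := by
          nlinarith [hone_le, hzR]
    _ = A * (N:ℝ) ^ η := by rw [hAdef]; ring
  have hstep4 : ((K + z : ℕ) : ℝ) ^ z ≤ A ^ z * (N:ℝ) ^ (δ/2) := by
    calc ((K + z : ℕ) : ℝ) ^ z ≤ (A * (N:ℝ) ^ η) ^ z :=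
        pow_le_pow_left₀ (by positivity) hstep3 z
    _ = A ^ z * ((N:ℝ) ^ η) ^ z := mul_pow _ _ _
    _ = A ^ z * (N:ℝ) ^ (δ/2) := by
        congr 1
        rw [← Real.rpow_natCast ((N:ℝ) ^ η) z, ← Real.rpow_mul (le_of_lt hNpos)]
        congr 1
        rw [hηdef]
        field_simp
  have hstep5 : (2:ℝ) ^ (2 * Kz) ≤ (N:ℝ) ^ (δ/2) := by
    have hzKz : ((z:ℝ)) ^ Kz ≤ (N:ℝ) := by exact_mod_cast Nat.pow_log_le_self z hNne
    have e1 : (2:ℝ) ^ (2 * Kz) = (((z:ℝ)) ^ Kz) ^ ((2:ℝ)/s₀) := by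
      have hz2 : (z:ℝ) = (2:ℝ) ^ (s₀:ℕ) := by rw [hzdef]; push_cast; ring
      rw [hz2, ← pow_mul, ← Real.rpow_natCast (2:ℝ) (s₀ * Kz), ← Real.rpow_mul (by norm_num)]
      rw [← Real.rpow_natCast (2:ℝ) (2 * Kz)]
      congr 1
      push_cast
      field_simp
    rw [e1]
    have h2s : (2:ℝ)/s₀ ≤ δ/2 := by
      rw [div_le_div_iff₀ (by positivity) (by norm_num)]
      have h4 : δ * (4/δ) = 4 := by field_simp
      nlinarith [mul_le_mul_of_nonneg_left hs₀R (le_of_lt hδ), h4]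
    calc (((z:ℝ)) ^ Kz) ^ ((2:ℝ)/s₀) ≤ (N:ℝ) ^ ((2:ℝ)/s₀) :=
        Real.rpow_le_rpow (by positivity) hzKz (by positivity)
    _ ≤ (N:ℝ) ^ (δ/2) := Real.rpow_le_rpow_of_exponent_le hNR h2s
  calc (((Finset.Icc 1 N).filter (fun n => rad n = r)).card : ℝ) ≤
      ((K + z : ℕ) : ℝ) ^ z * (2:ℝ) ^ (2 * Kz) := hcast
  _ ≤ (A ^ z * (N:ℝ) ^ (δ/2)) * (N:ℝ) ^ (δ/2) := by
      apply mul_le_mul hstep4 hstep5 (by positivity) (by positivity)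
  _ = A ^ z * ((N:ℝ) ^ (δ/2) * (N:ℝ) ^ (δ/2)) := by ring
  _ = A ^ z * (N:ℝ) ^ δ := by
      rw [← Real.rpow_add hNpos]
      norm_num

lemma rad_pos (n : ℕ) : 0 < rad n :=
  Finset.prod_pos fun _ hp => (Nat.prime_of_mem_primeFactors hp).pos

lemma rad_mul {m n : ℕ} (h : Nat.Coprime m n) : rad (m * n) = rad m * rad n := by
  unfold rad
  rw [h.primeFactors_mul, Finset.prod_union h.disjoint_primeFactors]

lemma rad_triple {a b c : ℕ} (hab : Nat.Coprime a b) (hsum : a + b = c) :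
    rad (a * b * c) = rad a * rad b * rad c := by
  have hac : Nat.Coprime a c := by
    rw [← hsum]; exact (Nat.coprime_self_add_right).mpr hab
  have hbc : Nat.Coprime b c := by
    rw [← hsum]; exact (Nat.coprime_add_self_right).mpr (Nat.Coprime.symm hab)
  rw [rad_mul (Nat.Coprime.mul hac hbc), rad_mul hab]

lemma log_le_rpow_div {x η : ℝ} (hx : 1 ≤ x) (hη : 0 < η) : Real.log x ≤ x ^ η / η := by
  have hxpos : (0:ℝ) < x := by linarith
  have h1 : Real.log (x ^ η) ≤ x ^ η - 1 :=
    Real.log_le_sub_one_of_pos (Real.rpow_pos_of_pos hxpos η)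
  rw [Real.log_rpow hxpos] at h1
  rw [le_div_iff₀ hη]
  nlinarith

lemma pair_small {p q w : ℕ} (hp : p ≤ w) (hq : q ≤ w) {X : ℝ} (hX : 0 ≤ X)
    (h : ((p * q * w : ℕ) : ℝ) < X) :
    ((p * q : ℕ) : ℝ) ^ (3 : ℕ) < X ^ (2 : ℕ) := by
  have hnat : (p * q) ^ 3 ≤ (p * q * w) ^ 2 := by
    have h1 : p * q ≤ w * w := Nat.mul_le_mul hp hq
    calc (p * q) ^ 3 = (p * q) ^ 2 * (p * q) := by ring
    _ ≤ (p * q) ^ 2 * (w * w) := Nat.mul_le_mul_left _ h1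
    _ = (p * q * w) ^ 2 := by ring
  have hc : ((p * q : ℕ) : ℝ) ^ (3:ℕ) ≤ ((p * q * w : ℕ) : ℝ) ^ (2:ℕ) := by
    exact_mod_cast hnat
  have h2 : ((p * q * w : ℕ) : ℝ) ^ (2:ℕ) < X ^ (2:ℕ) :=
    pow_lt_pow_left₀ h (by positivity) (by norm_num)
  linarith

theorem abc_aux (ε : ℝ) (hε : 0 < ε) (hε3 : ε ≤ 1/3) :
    ∃ C : ℝ, 0 < C ∧ ∀ N : ℕ, 1 ≤ N →
      ((((Finset.Icc 1 N) ×ˢ (Finset.Icc 1 N) ×ˢ (Finset.Icc 1 N)).filter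
          (fun t : ℕ × ℕ × ℕ => Nat.Coprime t.1 t.2.1 ∧ t.1 + t.2.1 = t.2.2 ∧
            (rad (t.1 * t.2.1 * t.2.2) : ℝ) < (t.2.2 : ℝ) ^ (1 - ε))).card : ℝ)
        ≤ C * (N : ℝ) ^ ((2 : ℝ) / 3) := by
  classical
  set δ : ℝ := 2 * ε / 9 with hδdef
  have hδ : 0 < δ := by positivity
  obtain ⟨B, hBpos, hB⟩ := fiber_card_le_real δ hδ
  refine ⟨3 * B ^ 2 * (1 + 1/δ), by positivity, ?_⟩
  intro N hN
  have hNR : (1:ℝ) ≤ (N:ℝ) := by exact_mod_cast hN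
  have hNpos : (0:ℝ) < (N:ℝ) := by linarith
  set T := (((Finset.Icc 1 N) ×ˢ (Finset.Icc 1 N) ×ˢ (Finset.Icc 1 N)).filter
          (fun t : ℕ × ℕ × ℕ => Nat.Coprime t.1 t.2.1 ∧ t.1 + t.2.1 = t.2.2 ∧
            (rad (t.1 * t.2.1 * t.2.2) : ℝ) < (t.2.2 : ℝ) ^ (1 - ε))) with hT
  set Rn : ℕ := ⌊(N:ℝ) ^ ((2 - 2*ε)/3)⌋₊ with hRndef
  set S := ((Finset.Icc 1 N) ×ˢ (Finset.Icc 1 N)).filter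
      (fun p : ℕ × ℕ => rad p.1 * rad p.2 ≤ Rn) with hS
  -- membership facts for T
  have hTmem : ∀ t ∈ T, (1 ≤ t.1 ∧ t.1 ≤ N) ∧ (1 ≤ t.2.1 ∧ t.2.1 ≤ N) ∧
      (1 ≤ t.2.2 ∧ t.2.2 ≤ N) ∧ Nat.Coprime t.1 t.2.1 ∧ t.1 + t.2.1 = t.2.2 ∧
      (rad (t.1 * t.2.1 * t.2.2) : ℝ) < (t.2.2 : ℝ) ^ (1 - ε) := by
    intro t ht
    simp only [hT, Finset.mem_filter, Finset.mem_product, Finset.mem_Icc] at ht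
    exact ⟨ht.1.1, ht.1.2.1, ht.1.2.2, ht.2⟩
  -- generic smallness: for t ∈ T and x y the two coordinates whose rads are ≤ rad of the third
  have hsmall : ∀ t ∈ T, ∀ x y w : ℕ,
      rad t.1 * rad t.2.1 * rad t.2.2 = rad x * rad y * rad w →
      rad x ≤ rad w → rad y ≤ rad w → rad x * rad y ≤ Rn := by
    intro t ht x y w hperm hxw hyw
    obtain ⟨ha, hb, hc, hcop, hsum, hrad⟩ := hTmem t ht
    have hprod : rad (t.1 * t.2.1 * t.2.2) = rad x * rad y * rad w := by
      rw [rad_triple hcop hsum]; exact hperm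
    have hXle : ((t.2.2 : ℕ) : ℝ) ^ (1 - ε) ≤ (N:ℝ) ^ (1 - ε) := by
      apply Real.rpow_le_rpow (by positivity) (by exact_mod_cast hc.2) (by linarith)
    have hlt : ((rad x * rad y * rad w : ℕ) : ℝ) < (N:ℝ) ^ (1 - ε) := by
      rw [← hprod]
      calc ((rad (t.1 * t.2.1 * t.2.2) : ℕ) : ℝ) < (t.2.2 : ℝ) ^ (1 - ε) := hrad
      _ ≤ (N:ℝ) ^ (1 - ε) := hXle
    have hcube : ((rad x * rad y : ℕ) : ℝ) ^ (3:ℕ) < ((N:ℝ) ^ (1 - ε)) ^ (2:ℕ) :=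
      pair_small hxw hyw (by positivity) hlt
    have hXeq : ((N:ℝ) ^ (1 - ε)) ^ (2:ℕ) = ((N:ℝ) ^ ((2 - 2*ε)/3)) ^ (3:ℕ) := by
      rw [← Real.rpow_natCast ((N:ℝ) ^ (1 - ε)) 2, ← Real.rpow_natCast ((N:ℝ) ^ ((2 - 2*ε)/3)) 3,
        ← Real.rpow_mul (le_of_lt hNpos), ← Real.rpow_mul (le_of_lt hNpos)]
      norm_num
      ring_nf
    rw [hXeq] at hcube
    have hlt2 : ((rad x * rad y : ℕ) : ℝ) < (N:ℝ) ^ ((2 - 2*ε)/3) := by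
      by_contra hcon
      push_neg at hcon
      have := pow_le_pow_left₀ (by positivity) hcon 3
      linarith
    exact Nat.le_floor (le_of_lt hlt2)
  -- the three subsets
  set T₁ := T.filter (fun t : ℕ × ℕ × ℕ => rad t.1 ≤ rad t.2.2 ∧ rad t.2.1 ≤ rad t.2.2) with hT₁
  set T₂ := T.filter (fun t : ℕ × ℕ × ℕ => rad t.1 ≤ rad t.2.1 ∧ rad t.2.2 ≤ rad t.2.1) with hT₂
  set T₃ := T.filter (fun t : ℕ × ℕ × ℕ => rad t.2.1 ≤ rad t.1 ∧ rad t.2.2 ≤ rad t.1) with hT₃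
  have hcover : T ⊆ T₁ ∪ T₂ ∪ T₃ := by
    intro t ht
    have hdisj : (rad t.1 ≤ rad t.2.2 ∧ rad t.2.1 ≤ rad t.2.2) ∨
        (rad t.1 ≤ rad t.2.1 ∧ rad t.2.2 ≤ rad t.2.1) ∨
        (rad t.2.1 ≤ rad t.1 ∧ rad t.2.2 ≤ rad t.1) := by omega
    simp only [Finset.mem_union, hT₁, hT₂, hT₃, Finset.mem_filter]
    tauto
  have hcard1 : T₁.card ≤ S.card := by
    refine Finset.card_le_card_of_injOn (fun t => (t.1, t.2.1)) ?_ ?_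
    · intro t ht
      have ht' : t ∈ T := Finset.mem_of_mem_filter t ht
      have hcond := (Finset.mem_filter.mp ht).2
      obtain ⟨ha, hb, hc, hcop, hsum, hrad⟩ := hTmem t ht'
      simp only [hS, Finset.mem_coe, Finset.mem_filter, Finset.mem_product, Finset.mem_Icc]
      refine ⟨⟨⟨ha.1, ha.2⟩, hb.1, hb.2⟩, ?_⟩
      exact hsmall t ht' t.1 t.2.1 t.2.2 rfl hcond.1 hcond.2
    · intro t ht u hu he
      have ht' := hTmem t (Finset.mem_of_mem_filter t ht)
      have hu' := hTmem u (Finset.mem_of_mem_filter u hu)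
      simp only [Prod.mk.injEq] at he
      have h1 : t.1 = u.1 := he.1
      have h2 : t.2.1 = u.2.1 := he.2
      have h3 : t.2.2 = u.2.2 := by omega
      exact Prod.ext h1 (Prod.ext h2 h3)
  have hcard2 : T₂.card ≤ S.card := by
    refine Finset.card_le_card_of_injOn (fun t => (t.1, t.2.2)) ?_ ?_
    · intro t ht
      have ht' : t ∈ T := Finset.mem_of_mem_filter t ht
      have hcond := (Finset.mem_filter.mp ht).2
      obtain ⟨ha, hb, hc, hcop, hsum, hrad⟩ := hTmem t ht'
      simp only [hS, Finset.mem_coe, Finset.mem_filter, Finset.mem_product, Finset.mem_Icc]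
      refine ⟨⟨⟨ha.1, ha.2⟩, hc.1, hc.2⟩, ?_⟩
      refine hsmall t ht' t.1 t.2.2 t.2.1 (by ring) hcond.1 hcond.2
    · intro t ht u hu he
      have ht' := hTmem t (Finset.mem_of_mem_filter t ht)
      have hu' := hTmem u (Finset.mem_of_mem_filter u hu)
      simp only [Prod.mk.injEq] at he
      have h1 : t.1 = u.1 := he.1
      have h2 : t.2.2 = u.2.2 := he.2
      have h3 : t.2.1 = u.2.1 := by omega
      exact Prod.ext h1 (Prod.ext h3 h2)
  have hcard3 : T₃.card ≤ S.card := by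
    refine Finset.card_le_card_of_injOn (fun t => (t.2.1, t.2.2)) ?_ ?_
    · intro t ht
      have ht' : t ∈ T := Finset.mem_of_mem_filter t ht
      have hcond := (Finset.mem_filter.mp ht).2
      obtain ⟨ha, hb, hc, hcop, hsum, hrad⟩ := hTmem t ht'
      simp only [hS, Finset.mem_coe, Finset.mem_filter, Finset.mem_product, Finset.mem_Icc]
      refine ⟨⟨⟨hb.1, hb.2⟩, hc.1, hc.2⟩, ?_⟩
      refine hsmall t ht' t.2.1 t.2.2 t.1 (by ring) hcond.1 hcond.2
    · intro t ht u hu he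
      have ht' := hTmem t (Finset.mem_of_mem_filter t ht)
      have hu' := hTmem u (Finset.mem_of_mem_filter u hu)
      simp only [Prod.mk.injEq] at he
      have h2 : t.2.1 = u.2.1 := he.1
      have h3 : t.2.2 = u.2.2 := he.2
      have h1 : t.1 = u.1 := by omega
      exact Prod.ext h1 (Prod.ext h2 h3)
  have hTcard : T.card ≤ 3 * S.card := by
    calc T.card ≤ (T₁ ∪ T₂ ∪ T₃).card := Finset.card_le_card hcover
    _ ≤ (T₁ ∪ T₂).card + T₃.card := Finset.card_union_le _ _
    _ ≤ T₁.card + T₂.card + T₃.card := by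
        have := Finset.card_union_le T₁ T₂
        omega
    _ ≤ 3 * S.card := by omega
  -- count S via fibers over D
  set D := ((Finset.Icc 1 Rn) ×ˢ (Finset.Icc 1 Rn)).filter
      (fun q : ℕ × ℕ => q.1 * q.2 ≤ Rn) with hD
  have hSD : ∀ p ∈ S, (rad p.1, rad p.2) ∈ D := by
    intro p hp
    have hp' := Finset.mem_filter.mp hp
    have hple := hp'.2
    have h1 : 0 < rad p.1 := rad_pos _
    have h2 : 0 < rad p.2 := rad_pos _
    have hle1 : rad p.1 ≤ Rn := le_trans (Nat.le_mul_of_pos_right _ h2) hple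
    have hle2 : rad p.2 ≤ Rn := le_trans (Nat.le_mul_of_pos_left _ h1) hple
    simp only [hD, Finset.mem_filter, Finset.mem_product, Finset.mem_Icc]
    exact ⟨⟨⟨h1, hle1⟩, h2, hle2⟩, hple⟩
  have hfiber : S.card = ∑ q ∈ D, (S.filter (fun p => (rad p.1, rad p.2) = q)).card :=
    Finset.card_eq_sum_card_fiberwise hSD
  have hfib_le : ∀ q ∈ D, ((S.filter (fun p => (rad p.1, rad p.2) = q)).card : ℝ) ≤
      (B * (N:ℝ) ^ δ) * (B * (N:ℝ) ^ δ) := by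
    intro q hq
    obtain ⟨q1, q2⟩ := q
    have hsub : S.filter (fun p => (rad p.1, rad p.2) = (q1, q2)) ⊆
        ((Finset.Icc 1 N).filter (fun n => rad n = q1)) ×ˢ
        ((Finset.Icc 1 N).filter (fun n => rad n = q2)) := by
      intro p hp
      simp only [Finset.mem_filter, hS, Finset.mem_product, Prod.mk.injEq] at hp ⊢
      exact ⟨⟨hp.1.1.1, hp.2.1⟩, hp.1.1.2, hp.2.2⟩
    have hle : (S.filter (fun p => (rad p.1, rad p.2) = (q1, q2))).card ≤
        ((Finset.Icc 1 N).filter (fun n => rad n = q1)).card *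
        ((Finset.Icc 1 N).filter (fun n => rad n = q2)).card := by
      calc _ ≤ _ := Finset.card_le_card hsub
      _ = _ := Finset.card_product _ _
    calc ((S.filter (fun p => (rad p.1, rad p.2) = (q1, q2))).card : ℝ) ≤
        (((Finset.Icc 1 N).filter (fun n => rad n = q1)).card : ℝ) *
        (((Finset.Icc 1 N).filter (fun n => rad n = q2)).card : ℝ) := by exact_mod_cast hle
    _ ≤ (B * (N:ℝ) ^ δ) * (B * (N:ℝ) ^ δ) := by
        have h0 : (0:ℝ) ≤ (((Finset.Icc 1 N).filter (fun n => rad n = q2)).card : ℝ) :=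
          Nat.cast_nonneg _
        have h1 : (0:ℝ) ≤ B * (N:ℝ) ^ δ := le_trans (Nat.cast_nonneg _) (hB N hN q1)
        exact mul_le_mul (hB N hN q1) (hB N hN q2) h0 h1
  have hScard : (S.card : ℝ) ≤ (D.card : ℝ) * ((B * (N:ℝ) ^ δ) * (B * (N:ℝ) ^ δ)) := by
    rw [hfiber]
    push_cast
    calc (∑ q ∈ D, ((S.filter (fun p => (rad p.1, rad p.2) = q)).card : ℝ)) ≤
        ∑ q ∈ D, (B * (N:ℝ) ^ δ) * (B * (N:ℝ) ^ δ) := Finset.sum_le_sum hfib_le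
    _ = (D.card : ℝ) * ((B * (N:ℝ) ^ δ) * (B * (N:ℝ) ^ δ)) := by
        rw [Finset.sum_const, nsmul_eq_mul]
  -- harmonic-type bound for D
  have hDsub : D ⊆ (Finset.Icc 1 Rn).biUnion
      (fun r1 => ({r1} : Finset ℕ) ×ˢ (Finset.Icc 1 (Rn / r1))) := by
    intro q hq
    simp only [hD, Finset.mem_filter, Finset.mem_product, Finset.mem_Icc] at hq
    rw [Finset.mem_biUnion]
    refine ⟨q.1, Finset.mem_Icc.mpr hq.1.1, ?_⟩
    apply Finset.mem_product.mpr
    refine ⟨Finset.mem_singleton_self _, Finset.mem_Icc.mpr ⟨hq.1.2.1, ?_⟩⟩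
    rw [Nat.le_div_iff_mul_le hq.1.1.1]
    rw [mul_comm]
    exact hq.2
  have hDcard : D.card ≤ ∑ r1 ∈ Finset.Icc 1 Rn, (Rn / r1) := by
    calc D.card ≤ _ := Finset.card_le_card hDsub
    _ ≤ ∑ r1 ∈ Finset.Icc 1 Rn, (({r1} : Finset ℕ) ×ˢ (Finset.Icc 1 (Rn / r1))).card :=
        Finset.card_biUnion_le
    _ = ∑ r1 ∈ Finset.Icc 1 Rn, (Rn / r1) := by
        apply Finset.sum_congr rfl
        intro x _
        rw [Finset.card_product, Finset.card_singleton, Nat.card_Icc]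
        simp
  have hRnle : (Rn : ℝ) ≤ (N:ℝ) ^ ((2 - 2*ε)/3) := Nat.floor_le (by positivity)
  have hRnleN : (Rn : ℝ) ≤ (N:ℝ) := by
    calc (Rn : ℝ) ≤ (N:ℝ) ^ ((2 - 2*ε)/3) := hRnle
    _ ≤ (N:ℝ) ^ (1:ℝ) := Real.rpow_le_rpow_of_exponent_le hNR (by linarith)
    _ = (N:ℝ) := Real.rpow_one _
  have hDreal : (D.card : ℝ) ≤ (N:ℝ) ^ ((2 - 2*ε)/3) * (1 + Real.log N) := by
    have h1 : (D.card : ℝ) ≤ ∑ r1 ∈ Finset.Icc 1 Rn, ((Rn / r1 : ℕ) : ℝ) := by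
      exact_mod_cast hDcard
    have h2 : ∑ r1 ∈ Finset.Icc 1 Rn, ((Rn / r1 : ℕ) : ℝ) ≤
        ∑ r1 ∈ Finset.Icc 1 Rn, (Rn : ℝ) * ((r1 : ℝ))⁻¹ := by
      apply Finset.sum_le_sum
      intro i _
      rw [mul_comm, ← div_eq_inv_mul]
      exact Nat.cast_div_le
    have h3 : ∑ r1 ∈ Finset.Icc 1 Rn, (Rn : ℝ) * ((r1 : ℝ))⁻¹ =
        (Rn : ℝ) * ((harmonic Rn : ℚ) : ℝ) := by
      rw [← Finset.mul_sum]
      congr 1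
      rw [harmonic_eq_sum_Icc]
      push_cast
      rfl
    have h4 : ((harmonic Rn : ℚ) : ℝ) ≤ 1 + Real.log Rn := harmonic_le_one_add_log Rn
    have h5 : Real.log Rn ≤ Real.log N := by
      rcases Nat.eq_zero_or_pos Rn with h | h
      · simp [h]
        exact Real.log_nonneg hNR
      · exact Real.log_le_log (by exact_mod_cast h) hRnleN
    have h6 : (0:ℝ) ≤ 1 + Real.log Rn := by
      rcases Nat.eq_zero_or_pos Rn with h | h
      · simp [h]
      · have : (1:ℝ) ≤ (Rn:ℝ) := by exact_mod_cast h
        have := Real.log_nonneg this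
        linarith
    have hfirst : (D.card : ℝ) ≤ (Rn : ℝ) * ((harmonic Rn : ℚ) : ℝ) := by
      rw [← h3]
      exact le_trans h1 h2
    calc (D.card : ℝ) ≤ (Rn : ℝ) * ((harmonic Rn : ℚ) : ℝ) := hfirst
    _ ≤ (Rn : ℝ) * (1 + Real.log Rn) := by
        apply mul_le_mul_of_nonneg_left h4 (by positivity)
    _ ≤ (N:ℝ) ^ ((2 - 2*ε)/3) * (1 + Real.log N) := by
        apply mul_le_mul hRnle (by linarith) h6 (by positivity)
  -- log bound
  have hlogN : 1 + Real.log N ≤ (1 + 1/δ) * (N:ℝ) ^ δ := by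
    have h1 : Real.log N ≤ (N:ℝ) ^ δ / δ := log_le_rpow_div hNR hδ
    have h2 : (1:ℝ) ≤ (N:ℝ) ^ δ := Real.one_le_rpow hNR (le_of_lt hδ)
    calc 1 + Real.log N ≤ (N:ℝ) ^ δ + (N:ℝ) ^ δ / δ := by linarith
    _ = (1 + 1/δ) * (N:ℝ) ^ δ := by ring
  -- final assembly
  have hTreal : (T.card : ℝ) ≤ 3 * (S.card : ℝ) := by exact_mod_cast hTcard
  have hexp : (N:ℝ) ^ ((2 - 2*ε)/3) * (N:ℝ) ^ δ * ((N:ℝ) ^ δ * (N:ℝ) ^ δ) =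
      (N:ℝ) ^ ((2:ℝ)/3) := by
    rw [← Real.rpow_add hNpos, ← Real.rpow_add hNpos, ← Real.rpow_add hNpos]
    congr 1
    rw [hδdef]
    ring
  calc (T.card : ℝ) ≤ 3 * (S.card : ℝ) := hTreal
  _ ≤ 3 * ((D.card : ℝ) * ((B * (N:ℝ) ^ δ) * (B * (N:ℝ) ^ δ))) := by
      apply mul_le_mul_of_nonneg_left hScard (by norm_num)
  _ ≤ 3 * (((N:ℝ) ^ ((2 - 2*ε)/3) * (1 + Real.log N)) *
        ((B * (N:ℝ) ^ δ) * (B * (N:ℝ) ^ δ))) := by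
      apply mul_le_mul_of_nonneg_left ?_ (by norm_num)
      apply mul_le_mul_of_nonneg_right hDreal (by positivity)
  _ ≤ 3 * (((N:ℝ) ^ ((2 - 2*ε)/3) * ((1 + 1/δ) * (N:ℝ) ^ δ)) *
        ((B * (N:ℝ) ^ δ) * (B * (N:ℝ) ^ δ))) := by
      apply mul_le_mul_of_nonneg_left ?_ (by norm_num)
      apply mul_le_mul_of_nonneg_right ?_ (by positivity)
      apply mul_le_mul_of_nonneg_left hlogN (by positivity)
  _ = (3 * B ^ 2 * (1 + 1/δ)) *
        ((N:ℝ) ^ ((2 - 2*ε)/3) * (N:ℝ) ^ δ * ((N:ℝ) ^ δ * (N:ℝ) ^ δ)) := by ring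
  _ = (3 * B ^ 2 * (1 + 1/δ)) * (N:ℝ) ^ ((2:ℝ)/3) := by rw [hexp]

theorem abc_almost_always (ε : ℝ) (hε : 0 < ε) :
    ∃ C : ℝ, 0 < C ∧ ∀ N : ℕ, 1 ≤ N →
      ((((Finset.Icc 1 N) ×ˢ (Finset.Icc 1 N) ×ˢ (Finset.Icc 1 N)).filter
          (fun t : ℕ × ℕ × ℕ => Nat.Coprime t.1 t.2.1 ∧ t.1 + t.2.1 = t.2.2 ∧
            (rad (t.1 * t.2.1 * t.2.2) : ℝ) < (t.2.2 : ℝ) ^ (1 - ε))).card : ℝ)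
        ≤ C * (N : ℝ) ^ ((2 : ℝ) / 3) := by
  set ε' : ℝ := min ε (1/3) with hε'def
  have hε'pos : 0 < ε' := lt_min hε (by norm_num)
  have hε'le : ε' ≤ 1/3 := min_le_right _ _
  have hε'ε : ε' ≤ ε := min_le_left _ _
  obtain ⟨C, hCpos, hC⟩ := abc_aux ε' hε'pos hε'le
  refine ⟨C, hCpos, ?_⟩
  intro N hN
  refine le_trans ?_ (hC N hN)
  have hsub : (((Finset.Icc 1 N) ×ˢ (Finset.Icc 1 N) ×ˢ (Finset.Icc 1 N)).filter
          (fun t : ℕ × ℕ × ℕ => Nat.Coprime t.1 t.2.1 ∧ t.1 + t.2.1 = t.2.2 ∧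
            (rad (t.1 * t.2.1 * t.2.2) : ℝ) < (t.2.2 : ℝ) ^ (1 - ε))) ⊆
      (((Finset.Icc 1 N) ×ˢ (Finset.Icc 1 N) ×ˢ (Finset.Icc 1 N)).filter
          (fun t : ℕ × ℕ × ℕ => Nat.Coprime t.1 t.2.1 ∧ t.1 + t.2.1 = t.2.2 ∧
            (rad (t.1 * t.2.1 * t.2.2) : ℝ) < (t.2.2 : ℝ) ^ (1 - ε'))) := by
    intro t ht
    simp only [Finset.mem_filter, Finset.mem_product, Finset.mem_Icc] at ht ⊢
    refine ⟨ht.1, ht.2.1, ht.2.2.1, ?_⟩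
    have hc1 : (1:ℝ) ≤ (t.2.2 : ℝ) := by exact_mod_cast ht.1.2.2.1
    calc (rad (t.1 * t.2.1 * t.2.2) : ℝ) < (t.2.2 : ℝ) ^ (1 - ε) := ht.2.2.2
    _ ≤ (t.2.2 : ℝ) ^ (1 - ε') := Real.rpow_le_rpow_of_exponent_le hc1 (by linarith)
  exact_mod_cast Nat.cast_le.mpr (Finset.card_le_card hsub)
end
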